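/- arXiv:1512.01448 — 6 statements merged into one kernel-verified Lean document; each statement's English description precedes it below -/
import Mathlib

section
/- Let D be a digraph on vertex set V = {1,…,n} and let q ≥ 3. Then the maximum of |Im(f)| over all f ∈ F[D,q] equals the maximum of |Im(f)| over all f ∈ F(D,q), and both equal q^{α_1(D)}. -/
open Function

/-- A `p`-walk in the digraph `D` on vertex set `Fin n`. -/
def IsPWalk {n : ℕ} (D : Fin n → Fin n → Prop) (p : ℕ) (w : Fin (p + 1) → Fin n) : Prop :=
  ∀ s : Fin p, D (w s.castSucc) (w s.succ)

/-- `alphaWalks D p` is the maximum number of pairwise independent `p`-walks in `D`. -/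
noncomputable def alphaWalks {n : ℕ} (D : Fin n → Fin n → Prop) (p : ℕ) : ℕ :=
  sSup {k : ℕ | ∃ W : Fin k → Fin (p + 1) → Fin n,
    (∀ i, IsPWalk D p (W i)) ∧ ∀ i j : Fin k, i ≠ j → ∀ s, W i s ≠ W j s}

/-- The interaction graph of an FDS: `(u,v)` is an arc iff `f_v` depends essentially on `x_u`. -/
def IG {n q : ℕ} (f : (Fin n → Fin q) → Fin n → Fin q) (u v : Fin n) : Prop :=
  ∃ x y : Fin n → Fin q, (∀ w : Fin n, w ≠ u → x w = y w) ∧ f x v ≠ f y v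

/-- Membership in `F[D,q]`: the interaction graph of `f` equals `D`. -/
def ExactIG {n q : ℕ} (D : Fin n → Fin n → Prop) (f : (Fin n → Fin q) → Fin n → Fin q) : Prop :=
  ∀ u v, IG f u v ↔ D u v

/-- Membership in `F(D,q)`: the interaction graph of `f` is contained in `D`. -/
def SubIG {n q : ℕ} (D : Fin n → Fin n → Prop) (f : (Fin n → Fin q) → Fin n → Fin q) : Prop :=
  ∀ u v, IG f u v → D u v

/-- A cycle of `D`, given by its list of (distinct) vertices, with arcs between consecutive
vertices, cyclically. A loop is a cycle with one vertex. -/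
def IsCycleList {n : ℕ} (D : Fin n → Fin n → Prop) (c : List (Fin n)) : Prop :=
  c ≠ [] ∧ c.Nodup ∧
    ∀ i : Fin c.length, D (c.get i) (c.get ⟨((i : ℕ) + 1) % c.length, Nat.mod_lt _ i.pos⟩)

/-- A path of `D`, given by its list of (distinct) vertices. -/
def IsPathList {n : ℕ} (D : Fin n → Fin n → Prop) (P : List (Fin n)) : Prop :=
  P.Nodup ∧ P.Chain' D

/-- `f^{(S)}`: update the coordinates in `S` only. -/
def applyBlock {n q : ℕ} (f : (Fin n → Fin q) → Fin n → Fin q) (S : Finset (Fin n))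
    (x : Fin n → Fin q) : Fin n → Fin q :=
  fun v => if v ∈ S then f x v else x v

/-- `f^σ = f^{(σ_t)} ∘ ⋯ ∘ f^{(σ_1)}`. -/
def applySchedule {n q : ℕ} (f : (Fin n → Fin q) → Fin n → Fin q)
    (σ : List (Finset (Fin n))) : (Fin n → Fin q) → Fin n → Fin q :=
  σ.foldl (fun g S => applyBlock f S ∘ g) id

/-- A block-sequential schedule: every vertex is updated exactly once. -/
def BlockSequential {n : ℕ} (σ : List (Finset (Fin n))) : Prop :=
  σ.Pairwise Disjoint ∧ ∀ v : Fin n, ∃ S ∈ σ, v ∈ S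

/-- A complete schedule: every vertex is updated at least once. -/
def CompleteSchedule {n : ℕ} (σ : List (Finset (Fin n))) : Prop :=
  ∀ v : Fin n, ∃ S ∈ σ, v ∈ S

/-- `T(D)`: the number of trivial strong components of `D`, i.e. the number of
vertices not lying on any cycle of `D`. -/
noncomputable def numTrivial {n : ℕ} (D : Fin n → Fin n → Prop) : ℕ :=
  Set.ncard {v : Fin n | ¬ ∃ c : List (Fin n), IsCycleList D c ∧ v ∈ c}

/-- All vertices of `D` can be covered by pairwise vertex-disjoint cycles. -/
def CoveredByDisjointCycles {n : ℕ} (D : Fin n → Fin n → Prop) : Prop :=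
  ∃ Cs : List (List (Fin n)), (∀ c ∈ Cs, IsCycleList D c) ∧
    Cs.Pairwise (fun a b => ∀ v ∈ a, v ∉ b) ∧ ∀ v : Fin n, ∃ c ∈ Cs, v ∈ c

attribute [local instance] Classical.propDecidable

lemma locality {n q : ℕ} {f : (Fin n → Fin q) → Fin n → Fin q} {v : Fin n} {A : Set (Fin n)}
    (h : ∀ u, u ∉ A → ¬ IG f u v) (s : Finset (Fin n)) :
    ∀ x y : Fin n → Fin q, (∀ w, x w ≠ y w → w ∈ s ∧ w ∉ A) → f x v = f y v := by
  induction s using Finset.induction_on with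
  | empty =>
    intro x y hxy
    have : x = y := funext fun w => by_contra fun hw => by simpa using (hxy w hw).1
    rw [this]
  | @insert a s ha ih =>
    intro x y hxy
    by_cases hax : x a = y a
    · refine ih x y fun w hw => ⟨?_, (hxy w hw).2⟩
      rcases Finset.mem_insert.1 (hxy w hw).1 with h1 | h1
      · exact absurd (h1 ▸ hw) (by simp [hax, h1])
      · exact h1
    · have haA : a ∉ A := (hxy a hax).2
      have h1 : f x v = f (Function.update x a (y a)) v := by
        by_contra hne
        exact h a haA ⟨x, Function.update x a (y a),
          fun w hw => (Function.update_of_ne hw _ _).symm, hne⟩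
      rw [h1]
      refine ih _ y fun w hw => ?_
      have hwa : w ≠ a := by
        rintro rfl; simp at hw
      rw [Function.update_of_ne hwa] at hw
      exact ⟨(Finset.mem_insert.1 (hxy w hw).1).resolve_left hwa, (hxy w hw).2⟩

lemma card_range_le_cover {n q : ℕ} (hq : 1 ≤ q) {D : Fin n → Fin n → Prop}
    {f : (Fin n → Fin q) → Fin n → Fin q} (hf : SubIG D f)
    {A B : Finset (Fin n)} (hcov : ∀ u v, D u v → u ∈ A ∨ v ∈ B) :
    Nat.card (Set.range f) ≤ q ^ (A.card + B.card) := by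
  set z : Fin q := ⟨0, hq⟩ with hz
  set h : (({x // x ∈ A} → Fin q) × ({x // x ∈ B} → Fin q)) → (Fin n → Fin q) :=
    fun p w => if hw : w ∈ B then p.2 ⟨w, hw⟩
      else f (fun a => if ha : a ∈ A then p.1 ⟨a, ha⟩ else z) w with hh
  have hsub : Set.range f ⊆ Set.range h := by
    rintro y ⟨x, rfl⟩
    refine ⟨(fun a => x a, fun b => f x b), ?_⟩
    funext w
    by_cases hw : w ∈ B
    · simp [hh, hw]
    · simp only [hh, dif_neg hw]
      refine locality (f := f) (v := w) (A := (A : Set (Fin n))) ?_ Finset.univ _ _ ?_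
      · intro a haA hIG
        rcases hcov a w (hf a w hIG) with h1 | h1
        · exact haA (by simpa using h1)
        · exact hw h1
      · intro a hne
        refine ⟨Finset.mem_univ _, fun haA => ?_⟩
        have : a ∈ A := by simpa using haA
        simp [this] at hne
  calc Nat.card (Set.range f) ≤ Nat.card (Set.range h) :=
        Nat.card_mono (Set.toFinite _) hsub
    _ ≤ Nat.card (({x // x ∈ A} → Fin q) × ({x // x ∈ B} → Fin q)) :=
        Nat.card_le_card_of_surjective (Set.rangeFactorization h)
          Set.rangeFactorization_surjective
    _ = q ^ (A.card + B.card) := by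
        rw [Nat.card_eq_fintype_card, Fintype.card_prod, Fintype.card_fun, Fintype.card_fun,
          Fintype.card_coe, Fintype.card_coe, Fintype.card_fin, pow_add]

lemma walkSet_bdd {n : ℕ} (D : Fin n → Fin n → Prop) (p : ℕ) :
    ∀ k ∈ {k : ℕ | ∃ W : Fin k → Fin (p + 1) → Fin n,
      (∀ i, IsPWalk D p (W i)) ∧ ∀ i j : Fin k, i ≠ j → ∀ s, W i s ≠ W j s}, k ≤ n := by
  rintro k ⟨W, -, hind⟩
  have : Function.Injective (fun i => W i 0) := by
    intro i j hij
    by_contra hne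
    exact hind i j hne 0 hij
  simpa using Fintype.card_le_of_injective _ this

lemma le_alphaWalks {n : ℕ} {D : Fin n → Fin n → Prop} {p k : ℕ}
    (h : ∃ W : Fin k → Fin (p + 1) → Fin n,
      (∀ i, IsPWalk D p (W i)) ∧ ∀ i j : Fin k, i ≠ j → ∀ s, W i s ≠ W j s) :
    k ≤ alphaWalks D p :=
  le_csSup ⟨n, walkSet_bdd D p⟩ h

lemma alphaWalks_mem {n : ℕ} (D : Fin n → Fin n → Prop) (p : ℕ) :
    ∃ W : Fin (alphaWalks D p) → Fin (p + 1) → Fin n,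
      (∀ i, IsPWalk D p (W i)) ∧
        ∀ i j : Fin (alphaWalks D p), i ≠ j → ∀ s, W i s ≠ W j s := by
  have h0 : 0 ∈ {k : ℕ | ∃ W : Fin k → Fin (p + 1) → Fin n,
      (∀ i, IsPWalk D p (W i)) ∧ ∀ i j : Fin k, i ≠ j → ∀ s, W i s ≠ W j s} :=
    ⟨fun i => i.elim0, fun i => i.elim0, fun i => i.elim0⟩
  exact Nat.sSup_mem ⟨0, h0⟩ ⟨n, walkSet_bdd D p⟩

lemma exists_cover {n : ℕ} (D : Fin n → Fin n → Prop) :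
    ∃ A B : Finset (Fin n), (∀ u v, D u v → u ∈ A ∨ v ∈ B) ∧
      A.card + B.card ≤ alphaWalks D 1 := by
  set N : Fin n → Finset (Fin n) := fun u => Finset.univ.filter (fun v => D u v) with hN
  set df : Finset (Fin n) → ℕ := fun S => S.card - (S.biUnion N).card with hdf
  set d : ℕ := Finset.univ.powerset.sup df with hd
  have hdle : ∀ S : Finset (Fin n), S.card - (S.biUnion N).card ≤ d := fun S =>
    Finset.le_sup (f := df) (by simp)
  obtain ⟨S₀, hS₀d, hS₀le⟩ : ∃ S₀ : Finset (Fin n),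
      S₀.card - (S₀.biUnion N).card = d ∧ (S₀.biUnion N).card ≤ S₀.card := by
    by_cases hd0 : d = 0
    · exact ⟨∅, by simp [hd0], by simp⟩
    · obtain ⟨S₀, -, h⟩ := Finset.exists_mem_eq_sup Finset.univ.powerset ⟨∅, by simp⟩ df
      have h2 : d = S₀.card - (S₀.biUnion N).card := h
      exact ⟨S₀, h2.symm, by omega⟩
  -- Hall setup
  have hmatch : n - d ≤ alphaWalks D 1 := by
    set t : Fin n → Finset (Fin n ⊕ Fin d) := fun a =>
      (N a).map ⟨Sum.inl, Sum.inl_injective⟩ ∪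
        (Finset.univ : Finset (Fin d)).map ⟨Sum.inr, Sum.inr_injective⟩ with ht
    have hall : ∀ s : Finset (Fin n), s.card ≤ (s.biUnion t).card := by
      intro s
      have hsub : ((s.biUnion N).map ⟨Sum.inl, Sum.inl_injective⟩ : Finset (Fin n ⊕ Fin d))
          ⊆ s.biUnion t := by
        intro a ha
        simp only [Finset.mem_map, Finset.mem_biUnion] at ha ⊢
        obtain ⟨b, ⟨c, hc, hb⟩, rfl⟩ := ha
        exact ⟨c, hc, Finset.mem_union.2 (Or.inl (Finset.mem_map.2 ⟨b, hb, rfl⟩))⟩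
      rcases s.eq_empty_or_nonempty with rfl | ⟨a0, ha0⟩
      · simp
      · have hsub2 : ((Finset.univ : Finset (Fin d)).map ⟨Sum.inr, Sum.inr_injective⟩ :
            Finset (Fin n ⊕ Fin d)) ⊆ s.biUnion t := by
          intro a ha
          refine Finset.mem_biUnion.2 ⟨a0, ha0, ?_⟩
          simp only [ht, Finset.mem_union]
          exact Or.inr ha
        have hdisj : Disjoint
            ((s.biUnion N).map ⟨Sum.inl, Sum.inl_injective⟩ : Finset (Fin n ⊕ Fin d))
            ((Finset.univ : Finset (Fin d)).map ⟨Sum.inr, Sum.inr_injective⟩) := by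
          simp only [Finset.disjoint_left, Finset.mem_map]
          rintro x ⟨b, -, rfl⟩ ⟨c, -, hc⟩
          exact absurd hc (by simp)
        have hunion := Finset.union_subset hsub hsub2
        have hcard := Finset.card_le_card hunion
        rw [Finset.card_union_of_disjoint hdisj] at hcard
        simp only [Finset.card_map, Finset.card_univ, Fintype.card_fin] at hcard
        have := hdle s
        omega
    obtain ⟨g, hginj, hgmem⟩ := (Finset.all_card_le_biUnion_card_iff_exists_injective t).1 hall
    set M : Finset (Fin n) := Finset.univ.filter (fun a => (g a).isLeft) with hM
    have hMcard : n - d ≤ M.card := by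
      have hcompl : Mᶜ.card ≤ d := by
        have hle2 : Mᶜ.card ≤ ((Finset.univ : Finset (Fin d)).map
            ⟨Sum.inr, Sum.inr_injective⟩ : Finset (Fin n ⊕ Fin d)).card := by
          refine Finset.card_le_card_of_injOn g ?_ ?_
          · intro a ha
            have ha' : ¬ (g a).isLeft := by
              simp only [hM, Finset.mem_compl, Finset.mem_filter, Finset.mem_univ,
                true_and] at ha
              simpa using ha
            rcases hga : g a with y | y
            · rw [hga] at ha'; simp at ha'
            · exact Finset.mem_map.2 ⟨y, Finset.mem_univ _, rfl⟩
          · intro a _ b _ hab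
            exact hginj hab
        simpa using hle2
      have h3 := Finset.card_compl M (α := Fin n)
      have h4 : M.card ≤ n := by simpa using Finset.card_le_univ M
      simp only [Fintype.card_fin] at h3
      omega
    -- build walks
    have hle : n - d ≤ M.card := hMcard
    set e : Fin (n - d) ↪o Fin n := M.orderEmbOfCardLe hle with he
    have heM : ∀ i, e i ∈ M := fun i => M.orderEmbOfCardLe_mem hle i
    have hleft : ∀ i : Fin (n - d), ∃ y, g (e i) = Sum.inl y := by
      intro i
      have := heM i
      simp only [hM, Finset.mem_filter] at this
      rcases hgy : g (e i) with y | y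
      · exact ⟨y, rfl⟩
      · rw [hgy] at this; simp at this
    set vo : Fin (n - d) → Fin n := fun i => (hleft i).choose with hvo
    have hvog : ∀ i, g (e i) = Sum.inl (vo i) := fun i => (hleft i).choose_spec
    have hDvo : ∀ i, D (e i) (vo i) := by
      intro i
      have hmem := hgmem (e i)
      rw [hvog i] at hmem
      simp only [ht, Finset.mem_union, Finset.mem_map] at hmem
      rcases hmem with ⟨b, hb, hb2⟩ | ⟨b, -, hb2⟩
      · have : b = vo i := by simpa using hb2
        subst this
        simp only [hN, Finset.mem_filter] at hb
        exact hb.2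
      · exact absurd hb2 (by simp)
    refine le_alphaWalks ⟨fun i s => if (s : ℕ) = 0 then e i else vo i, ?_, ?_⟩
    · intro i s
      have hs : s = 0 := Subsingleton.elim _ _
      subst hs
      simp only [Fin.castSucc_zero, Fin.succ_zero_eq_one, Fin.val_zero, Fin.val_one,
        if_pos rfl, if_neg one_ne_zero]
      exact hDvo i
    · intro i j hij s
      by_cases hs : (s : ℕ) = 0
      · simp only [hs, if_pos rfl]
        intro h
        exact hij (e.injective h)
      · simp only [if_neg hs]
        intro h
        apply hij
        apply e.injective
        apply hginj
        rw [hvog i, hvog j, h]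
  refine ⟨S₀ᶜ, S₀.biUnion N, ?_, ?_⟩
  · intro a b hab
    by_cases ha : a ∈ S₀
    · exact Or.inr (Finset.mem_biUnion.2 ⟨a, ha, by simp [hN, hab]⟩)
    · exact Or.inl (Finset.mem_compl.2 ha)
  · have h1 : S₀ᶜ.card = n - S₀.card := by
      rw [Finset.card_compl]; simp
    have h2 : S₀.card ≤ n := by
      simpa using Finset.card_le_univ S₀
    omega

/-- swap 0 and 1 in `Fin q`. -/
noncomputable def sw {q : ℕ} (hq : 3 ≤ q) (a : Fin q) : Fin q :=
  if a = ⟨0, by omega⟩ then ⟨1, by omega⟩ else if a = ⟨1, by omega⟩ then ⟨0, by omega⟩ else a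

lemma sw_invol {q : ℕ} (hq : 3 ≤ q) (a : Fin q) : sw hq (sw hq a) = a := by
  have h01 : (⟨0, by omega⟩ : Fin q) ≠ ⟨1, by omega⟩ := by simp [Fin.ext_iff]
  by_cases h0 : a = ⟨0, by omega⟩
  · subst h0
    simp [sw, h01, h01.symm]
  · by_cases h1 : a = ⟨1, by omega⟩
    · subst h1
      simp [sw, h01, h01.symm]
    · simp [sw, h0, h1]

lemma sw_inj {q : ℕ} (hq : 3 ≤ q) : Function.Injective (sw hq) :=
  Function.LeftInverse.injective (g := sw hq) (sw_invol hq)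

lemma sw_two {q : ℕ} (hq : 3 ≤ q) (a : Fin q) :
    sw hq a = ⟨2, by omega⟩ ↔ a = ⟨2, by omega⟩ := by
  simp only [sw]
  split_ifs with h1 h2 <;> simp_all [Fin.ext_iff]

lemma exists_good {n q : ℕ} (hq : 3 ≤ q) (D : Fin n → Fin n → Prop) {k : ℕ}
    (u v : Fin k → Fin n) (hD : ∀ i, D (u i) (v i)) (hu : Function.Injective u)
    (hv : Function.Injective v) :
    ∃ f : (Fin n → Fin q) → Fin n → Fin q, ExactIG D f ∧ q ^ k ≤ Nat.card (Set.range f) := by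
  set z0 : Fin q := ⟨0, by omega⟩ with hz0
  set z1 : Fin q := ⟨1, by omega⟩ with hz1
  set z2 : Fin q := ⟨2, by omega⟩ with hz2
  have h01 : z0 ≠ z1 := by simp [hz0, hz1, Fin.ext_iff]
  have h02 : z0 ≠ z2 := by simp [hz0, hz2, Fin.ext_iff]
  have h12 : z1 ≠ z2 := by simp [hz1, hz2, Fin.ext_iff]
  set f : (Fin n → Fin q) → Fin n → Fin q := fun x w =>
    if h : ∃ i, v i = w then
      (if ∃ a, D a w ∧ a ≠ u h.choose ∧ x a = z2 then sw hq (x (u h.choose))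
        else x (u h.choose))
    else if ∃ a, D a w ∧ x a = z2 then z1 else z0 with hf
  -- f x w only depends on in-neighbour coordinates of w
  have F1 : ∀ (x y : Fin n → Fin q) (w : Fin n), (∀ a, D a w → x a = y a) →
      f x w = f y w := by
    intro x y w hxy
    by_cases h : ∃ i, v i = w
    · have hDu : D (u h.choose) w := by
        have := hD h.choose
        rwa [h.choose_spec] at this
      have hx : x (u h.choose) = y (u h.choose) := hxy _ hDu
      have hiff : (∃ a, D a w ∧ a ≠ u h.choose ∧ x a = z2) ↔
          (∃ a, D a w ∧ a ≠ u h.choose ∧ y a = z2) := by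
        constructor <;> rintro ⟨a, ha1, ha2, ha3⟩
        · exact ⟨a, ha1, ha2, by rw [← hxy a ha1]; exact ha3⟩
        · exact ⟨a, ha1, ha2, by rw [hxy a ha1]; exact ha3⟩
      simp only [hf, dif_pos h]
      rw [hx, if_congr hiff rfl rfl]
    · have hiff : (∃ a, D a w ∧ x a = z2) ↔ (∃ a, D a w ∧ y a = z2) := by
        constructor <;> rintro ⟨a, ha1, ha3⟩
        · exact ⟨a, ha1, by rw [← hxy a ha1]; exact ha3⟩
        · exact ⟨a, ha1, by rw [hxy a ha1]; exact ha3⟩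
      simp only [hf, dif_neg h]
      rw [if_congr hiff rfl rfl]
  -- value at matched vertices
  have F3 : ∀ (x : Fin n → Fin q) (i : Fin k), f x (v i) =
      if ∃ a, D a (v i) ∧ a ≠ u i ∧ x a = z2 then sw hq (x (u i)) else x (u i) := by
    intro x i
    have h : ∃ j, v j = v i := ⟨i, rfl⟩
    have hch : h.choose = i := hv h.choose_spec
    simp only [hf, dif_pos h, hch]
  constructor
  constructor
  · -- ExactIG
    intro a w
    constructor
    · -- IG → D
      rintro ⟨x, y, hxy, hne⟩
      by_contra hDaw
      exact hne (F1 x y w fun b hb => hxy b (fun e => hDaw (e ▸ hb)))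
    · -- D → IG
      intro hDaw
      by_cases h : ∃ i, v i = w
      · obtain ⟨i, rfl⟩ := h
        by_cases hau : a = u i
        · subst hau
          refine ⟨fun _ => z0, Function.update (fun _ => z0) (u i) z1,
            fun b hb => (Function.update_of_ne hb z1 (fun _ => z0)).symm, ?_⟩
          rw [F3, F3]
          have hc1 : ¬ ∃ b, D b (v i) ∧ b ≠ u i ∧ (fun _ => z0) b = z2 := by
            rintro ⟨b, -, -, hb⟩; exact h02 hb
          have hc2 : ¬ ∃ b, D b (v i) ∧ b ≠ u i ∧
              Function.update (fun _ => z0) (u i) z1 b = z2 := by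
            rintro ⟨b, -, -, hb⟩
            by_cases hba : b = u i
            · subst hba; rw [Function.update_self] at hb; exact h12 hb
            · rw [Function.update_of_ne hba] at hb; exact h02 hb
          rw [if_neg hc1, if_neg hc2, Function.update_self]
          exact h01
        · refine ⟨fun _ => z0, Function.update (fun _ => z0) a z2,
            fun b hb => (Function.update_of_ne hb z2 (fun _ => z0)).symm, ?_⟩
          rw [F3, F3]
          have hc1 : ¬ ∃ b, D b (v i) ∧ b ≠ u i ∧ (fun _ => z0) b = z2 := by
            rintro ⟨b, -, -, hb⟩; exact h02 hb
          have hc2 : ∃ b, D b (v i) ∧ b ≠ u i ∧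
              Function.update (fun _ => z0) a z2 b = z2 :=
            ⟨a, hDaw, hau, by rw [Function.update_self]⟩
          rw [if_neg hc1, if_pos hc2, Function.update_of_ne (fun e => hau e.symm)]
          have : sw hq z0 = z1 := by simp [sw, hz0, hz1]
          rw [this]
          exact h01
      · refine ⟨fun _ => z0, Function.update (fun _ => z0) a z2,
          fun b hb => (Function.update_of_ne hb z2 (fun _ => z0)).symm, ?_⟩
        simp only [hf, dif_neg h]
        have hc1 : ¬ ∃ b, D b w ∧ (fun _ => z0) b = z2 := by
          rintro ⟨b, -, hb⟩; exact h02 hb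
        have hc2 : ∃ b, D b w ∧ Function.update (fun _ => z0) a z2 b = z2 :=
          ⟨a, hDaw, by rw [Function.update_self]⟩
        rw [if_neg hc1, if_pos hc2]
        exact h01
  · -- cardinality lower bound
    set e : (Fin k → Fin q) → (Fin n → Fin q) := fun c w =>
      if h : ∃ i, u i = w then c h.choose else z0 with he
    have heu : ∀ (c : Fin k → Fin q) (i : Fin k), e c (u i) = c i := by
      intro c i
      have h : ∃ j, u j = u i := ⟨i, rfl⟩
      have hch : h.choose = i := hu h.choose_spec
      simp only [he, dif_pos h, hch]
    have he2 : ∀ (c : Fin k → Fin q) (w : Fin n), e c w = z2 → ∃ i, u i = w ∧ c i = z2 := by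
      intro c w hw
      simp only [he] at hw
      split_ifs at hw with h
      · exact ⟨h.choose, h.choose_spec, hw⟩
      · exact absurd hw h02
    have hinj : Function.Injective (fun c => f (e c)) := by
      intro c b hcb
      simp only at hcb
      -- 2-patterns agree
      have hval : ∀ i : Fin k,
          (if ∃ a, D a (v i) ∧ a ≠ u i ∧ e c a = z2 then sw hq (c i) else c i) =
          (if ∃ a, D a (v i) ∧ a ≠ u i ∧ e b a = z2 then sw hq (b i) else b i) := by
        intro i
        have := congrFun hcb (v i)
        rw [F3, F3, heu, heu] at this
        exact this
      have hpat : ∀ i : Fin k, c i = z2 ↔ b i = z2 := by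
        intro i
        have h1 : (if ∃ a, D a (v i) ∧ a ≠ u i ∧ e c a = z2 then sw hq (c i) else c i) = z2
            ↔ c i = z2 := by
          split_ifs
          · exact sw_two hq (c i)
          · exact Iff.rfl
        have h2 : (if ∃ a, D a (v i) ∧ a ≠ u i ∧ e b a = z2 then sw hq (b i) else b i) = z2
            ↔ b i = z2 := by
          split_ifs
          · exact sw_two hq (b i)
          · exact Iff.rfl
        rw [← h1, ← h2, hval i]
      have hcond : ∀ i : Fin k,
          (∃ a, D a (v i) ∧ a ≠ u i ∧ e c a = z2) ↔ (∃ a, D a (v i) ∧ a ≠ u i ∧ e b a = z2) := by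
        intro i
        constructor <;> rintro ⟨a, ha1, ha2, ha3⟩
        · obtain ⟨j, rfl, hj⟩ := he2 c a ha3
          exact ⟨u j, ha1, ha2, by rw [heu]; exact (hpat j).1 hj⟩
        · obtain ⟨j, rfl, hj⟩ := he2 b a ha3
          exact ⟨u j, ha1, ha2, by rw [heu]; exact (hpat j).2 hj⟩
      funext i
      have := hval i
      rw [if_congr (hcond i) rfl rfl] at this
      by_cases hP : ∃ a, D a (v i) ∧ a ≠ u i ∧ e b a = z2
      · rw [if_pos hP, if_pos hP] at this
        exact sw_inj hq this
      · rwa [if_neg hP, if_neg hP] at this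
    have hinj2 : Function.Injective
        (fun c : Fin k → Fin q => (⟨f (e c), Set.mem_range_self _⟩ : Set.range f)) := by
      intro c b hcb
      exact hinj (congrArg Subtype.val hcb)
    calc q ^ k = Nat.card (Fin k → Fin q) := by
          rw [Nat.card_eq_fintype_card, Fintype.card_fun, Fintype.card_fin, Fintype.card_fin]
      _ ≤ Nat.card (Set.range f) := Nat.card_le_card_of_injective _ hinj2


/-- for `q ≥ 3`, the maximum of `|Im(f)|` over `F[D,q]` and the maximum over
`F(D,q)` both equal `q ^ α_1(D)`. -/
theorem max_rank {n q : ℕ} (hn : 1 ≤ n) (hq : 3 ≤ q) (D : Fin n → Fin n → Prop) :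
    IsGreatest {r : ℕ | ∃ f : (Fin n → Fin q) → Fin n → Fin q,
        ExactIG D f ∧ r = Nat.card (Set.range f)} (q ^ alphaWalks D 1) ∧
    IsGreatest {r : ℕ | ∃ f : (Fin n → Fin q) → Fin n → Fin q,
        SubIG D f ∧ r = Nat.card (Set.range f)} (q ^ alphaWalks D 1) := by
  obtain ⟨W, hW1, hW2⟩ := alphaWalks_mem D 1
  have hD : ∀ i, D (W i 0) (W i 1) := by
    intro i
    have := hW1 i 0
    simp only [Fin.castSucc_zero, Fin.succ_zero_eq_one] at this
    exact this
  have hu : Function.Injective (fun i => W i 0) := fun i j hij => by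
    by_contra hne; exact hW2 i j hne 0 hij
  have hv : Function.Injective (fun i => W i 1) := fun i j hij => by
    by_contra hne; exact hW2 i j hne 1 hij
  obtain ⟨f, hf_exact, hf_ge⟩ :=
    exists_good hq D (fun i => W i 0) (fun i => W i 1) hD hu hv
  obtain ⟨A, B, hcov, hAB⟩ := exists_cover D
  have upper : ∀ g : (Fin n → Fin q) → Fin n → Fin q, SubIG D g →
      Nat.card (Set.range g) ≤ q ^ alphaWalks D 1 := by
    intro g hg
    calc Nat.card (Set.range g) ≤ q ^ (A.card + B.card) :=
          card_range_le_cover (by omega) hg hcov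
      _ ≤ q ^ alphaWalks D 1 := Nat.pow_le_pow_right (by omega) hAB
  have hf_sub : SubIG D f := fun a w h => (hf_exact a w).1 h
  have hcard : Nat.card (Set.range f) = q ^ alphaWalks D 1 := le_antisymm (upper f hf_sub) hf_ge
  refine ⟨⟨⟨f, hf_exact, hcard.symm⟩, ?_⟩, ⟨⟨f, hf_sub, hcard.symm⟩, ?_⟩⟩
  · rintro r ⟨g, hg, rfl⟩
    exact upper g (fun a w h => (hg a w).1 h)
  · rintro r ⟨g, hg, rfl⟩
    exact upper g hg
end

section
/- Let D be a digraph on vertex set V = {1,…,n} and let q ≥ 3. There exists f ∈ F[D,q] that is a permutation (bijection) of [q]^n if and only if all the vertices of D can be covered by pairwise vertex-disjoint cycles of D. -/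
open Function

lemma indep {n q : ℕ} (f : (Fin n → Fin q) → Fin n → Fin q) (v : Fin n)
    (x y : Fin n → Fin q) (h : ∀ u, IG f u v → x u = y u) : f x v = f y v := by
  classical
  suffices H : ∀ (k : ℕ) (x y : Fin n → Fin q),
      (Finset.univ.filter fun u => x u ≠ y u).card ≤ k →
      (∀ u, IG f u v → x u = y u) → f x v = f y v by
    exact H n x y (le_trans (Finset.card_le_univ _) (by simp)) h
  intro k
  induction k with
  | zero =>
    intro x y hc h
    have hxy : x = y := by
      funext u
      by_contra hu
      have : u ∈ Finset.univ.filter (fun u => x u ≠ y u) := by simp [hu]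
      have := Finset.card_pos.mpr ⟨u, this⟩
      omega
    rw [hxy]
  | succ k ih =>
    intro x y hc h
    by_cases hxy : ∀ u, x u = y u
    · rw [show x = y from funext hxy]
    · push_neg at hxy
      obtain ⟨u, hu⟩ := hxy
      have hnIG : ¬ IG f u v := fun hIG => hu (h u hIG)
      have step : f x v = f (Function.update x u (y u)) v := by
        by_contra hne
        exact hnIG ⟨x, Function.update x u (y u),
          fun w hw => (Function.update_of_ne hw _ _).symm, hne⟩
      rw [step]
      apply ih
      · have hmem : u ∈ Finset.univ.filter (fun w => x w ≠ y w) := by simp [hu]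
        have hsub : (Finset.univ.filter fun w => Function.update x u (y u) w ≠ y w) ⊆
            (Finset.univ.filter fun w => x w ≠ y w).erase u := by
          intro w hw
          simp only [Finset.mem_filter, Finset.mem_univ, true_and] at hw
          rcases eq_or_ne w u with rfl | hne
          · simp [Function.update_self] at hw
          · rw [Function.update_of_ne hne] at hw
            simp [Finset.mem_erase, hne, hw]
        have := Finset.card_le_card hsub
        rw [Finset.card_erase_of_mem hmem] at this
        omega
      · intro w hw
        rcases eq_or_ne w u with rfl | hne
        · simp [Function.update_self]
        · rw [Function.update_of_ne hne]; exact h w hw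

lemma hall_dir {n q : ℕ} (hq : 3 ≤ q) {D : Fin n → Fin n → Prop}
    (f : (Fin n → Fin q) → Fin n → Fin q) (hIG : ExactIG D f) (hb : Function.Bijective f) :
    ∃ σ : Fin n → Fin n, Function.Injective σ ∧ ∀ v, D (σ v) v := by
  classical
  set N : Fin n → Finset (Fin n) := fun v => Finset.univ.filter (fun u => D u v) with hN
  have hhall : ∀ S : Finset (Fin n), S.card ≤ (S.biUnion N).card := by
    intro S
    set T := S.biUnion N with hT
    let ext : (↥T → Fin q) → (Fin n → Fin q) :=
      fun t u => if h : u ∈ T then t ⟨u, h⟩ else ⟨0, by omega⟩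
    let Ψ : (↥T → Fin q) → (↥S → Fin q) := fun t v => f (ext t) v.1
    have hsurj : Function.Surjective Ψ := by
      intro a
      obtain ⟨x, hx⟩ := hb.2 (fun u => if h : u ∈ S then a ⟨u, h⟩ else ⟨0, by omega⟩)
      refine ⟨fun u => x u.1, ?_⟩
      funext v
      have heq : f (ext fun u => x u.1) v.1 = f x v.1 := by
        apply indep
        intro u hu
        have hDuv : D u v.1 := (hIG u v.1).1 hu
        have hTm : u ∈ T := Finset.mem_biUnion.2 ⟨v.1, v.2, by simp [hN, hDuv]⟩
        simp [ext, hTm]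
      show f (ext fun u => x u.1) v.1 = a v
      rw [heq, hx]
      simp [v.2]
    have hle := Fintype.card_le_of_surjective Ψ hsurj
    rw [Fintype.card_fun, Fintype.card_fun, Fintype.card_coe, Fintype.card_coe,
      Fintype.card_fin] at hle
    exact (Nat.pow_le_pow_iff_right (by omega : 1 < q)).1 hle
  obtain ⟨σ, hinj, hmem⟩ := (Finset.all_card_le_biUnion_card_iff_exists_injective N).1 hhall
  refine ⟨σ, hinj, fun v => ?_⟩
  have := hmem v
  simp [hN] at this
  exact this

lemma perm_of_cover {n : ℕ} {D : Fin n → Fin n → Prop} (h : CoveredByDisjointCycles D) :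
    ∃ P : Equiv.Perm (Fin n), ∀ v, D (P v) v := by
  classical
  obtain ⟨Cs, hcyc, hdisj, hcov⟩ := h
  choose c hc hvc using hcov
  have huniq : ∀ {c₁ c₂}, c₁ ∈ Cs → c₂ ∈ Cs → ∀ {v : Fin n}, v ∈ c₁ → v ∈ c₂ → c₁ = c₂ := by
    intro c₁ c₂ h₁ h₂ v hv₁ hv₂
    by_contra hne
    have hsymm : Symmetric (fun a b : List (Fin n) => ∀ v ∈ a, v ∉ b) :=
      fun a b hh w hw hw' => hh w hw' hw
    haveI : Std.Symm (fun a b : List (Fin n) => ∀ v ∈ a, v ∉ b) := ⟨fun a b hh => hsymm hh⟩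
    exact (hdisj.forall h₁ h₂ hne) v hv₁ hv₂
  set nxt : Fin n → Fin n := fun v => (c v).formPerm v with hnxt
  have hnmem : ∀ v, nxt v ∈ c v := fun v => List.formPerm_apply_mem_of_mem (hvc v)
  have harc : ∀ v, D v (nxt v) := by
    intro v
    obtain ⟨i, hi⟩ := List.mem_iff_get.mp (hvc v)
    have hnd := (hcyc _ (hc v)).2.1
    have harc' := (hcyc _ (hc v)).2.2 i
    have hfp : (c v).formPerm ((c v).get i) =
        (c v).get ⟨((i : ℕ) + 1) % (c v).length, Nat.mod_lt _ i.pos⟩ := by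
      have := List.formPerm_apply_getElem (c v) hnd i i.isLt
      simpa [List.get_eq_getElem] using this
    show D v ((c v).formPerm v)
    have hstep : (c v).formPerm v = (c v).get ⟨((i : ℕ) + 1) % (c v).length, Nat.mod_lt _ i.pos⟩ :=
      (congrArg (c v).formPerm hi).symm.trans hfp
    rw [hstep]
    rw [hi] at harc'
    exact harc'
  have hinj : Function.Injective nxt := by
    intro a b hab
    have hcc : c a = c b := huniq (hc a) (hc b) (hnmem a) (hab ▸ hnmem b)
    have : (c a).formPerm a = (c a).formPerm b := by
      rw [show (c a).formPerm b = (c b).formPerm b from by rw [hcc]]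
      exact hab
    exact (Equiv.injective _) this
  set E := Equiv.ofBijective nxt (Finite.injective_iff_bijective.mp hinj) with hE
  refine ⟨E.symm, fun v => ?_⟩
  have h1 : nxt (E.symm v) = v := E.apply_symm_apply v
  have h2 := harc (E.symm v)
  rwa [h1] at h2

lemma cover_of_perm {n : ℕ} {D : Fin n → Fin n → Prop} (ρ : Equiv.Perm (Fin n))
    (hD : ∀ v, D v (ρ v)) : CoveredByDisjointCycles D := by
  classical
  set L : Fin n → List (Fin n) := fun r => if ρ r = r then [r] else ρ.toList r with hL
  set orb : Fin n → Finset (Fin n) :=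
    fun v => if ρ v = v then {v} else (ρ.cycleOf v).support with horb
  have horb_mem : ∀ v, v ∈ orb v := by
    intro v
    by_cases h : ρ v = v
    · simp [horb, h]
    · simp only [horb, h, if_neg h, Equiv.Perm.mem_support_cycleOf_iff]
      exact ⟨Equiv.Perm.SameCycle.refl _ _, by simp [Equiv.Perm.mem_support, h]⟩
  have hLmem : ∀ r w, w ∈ L r ↔ w ∈ orb r := by
    intro r w
    show w ∈ (if ρ r = r then [r] else ρ.toList r) ↔
      w ∈ (if ρ r = r then ({r} : Finset (Fin n)) else (ρ.cycleOf r).support)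
    by_cases h : ρ r = r
    · rw [if_pos h, if_pos h]; simp
    · rw [if_neg h, if_neg h, Equiv.Perm.mem_toList_iff, Equiv.Perm.mem_support_cycleOf_iff]
  have horb_eq : ∀ v w, w ∈ orb v → orb w = orb v := by
    intro v w hw
    by_cases h : ρ v = v
    · simp [horb, h] at hw
      rw [hw]
    · have hw' : w ∈ (ρ.cycleOf v).support := by simpa [horb, h] using hw
      have hsc := (Equiv.Perm.mem_support_cycleOf_iff).1 hw'
      have hws : w ∈ ρ.support := (Equiv.Perm.support_cycleOf_le ρ v) hw'
      have hwfix : ¬ ρ w = w := by simpa [Equiv.Perm.mem_support] using hws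
      simp [horb, h, hwfix, hsc.1.cycleOf_eq]
  set rep : Fin n → Fin n := fun v => (orb v).min' ⟨v, horb_mem v⟩ with hrep
  have hrep_mem : ∀ v, rep v ∈ orb v := fun v => Finset.min'_mem _ _
  have hrep_eq : ∀ v w, w ∈ orb v → rep w = rep v := by
    intro v w hw
    have : orb w = orb v := horb_eq v w hw
    simp only [hrep]
    congr 1
  have hrep_rep : ∀ v, rep (rep v) = rep v := fun v => hrep_eq v (rep v) (hrep_mem v)
  refine ⟨((Finset.univ.image rep).toList).map L, ?_, ?_, ?_⟩
  · intro c hcm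
    simp only [List.mem_map] at hcm
    obtain ⟨r, _, rfl⟩ := hcm
    show IsCycleList D (if ρ r = r then [r] else ρ.toList r)
    by_cases h : ρ r = r
    · rw [if_pos h]
      refine ⟨by simp, by simp, ?_⟩
      intro i
      have h1 : ∀ j : Fin ([r] : List (Fin n)).length, ([r] : List (Fin n)).get j = r := by
        intro j
        rw [List.get_eq_getElem]
        have := List.getElem_mem (l := ([r] : List (Fin n))) (n := (j : ℕ)) j.isLt
        simpa using this
      rw [h1, h1]
      have := hD r
      rwa [h] at this
    · rw [if_neg h]
      have hrs : r ∈ ρ.support := by simp [Equiv.Perm.mem_support, h]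
      refine ⟨?_, Equiv.Perm.nodup_toList ρ r, ?_⟩
      · rw [Ne, Equiv.Perm.toList_eq_nil_iff]
        simpa using hrs
      · intro i
        have hlen : (ρ.toList r).length = (ρ.cycleOf r).support.card :=
          Equiv.Perm.length_toList ρ r
        have hord : orderOf (ρ.cycleOf r) = (ρ.cycleOf r).support.card :=
          (Equiv.Perm.isCycle_cycleOf ρ h).orderOf
        have hget : ∀ (k : ℕ) (hk : k < (ρ.toList r).length),
            (ρ.toList r).get ⟨k, hk⟩ = (ρ ^ k) r := fun k hk => Equiv.Perm.getElem_toList ρ r k hk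
        rw [hget, hget]
        have step : ∀ m : ℕ, (ρ.cycleOf r ^ (m % (ρ.toList r).length)) r
            = (ρ.cycleOf r ^ m) r := by
          intro m
          rw [hlen, ← hord, pow_mod_orderOf]
        have hmod : (ρ ^ (((i : ℕ) + 1) % (ρ.toList r).length)) r = (ρ ^ ((i : ℕ) + 1)) r := by
          calc (ρ ^ (((i : ℕ) + 1) % (ρ.toList r).length)) r
              = (ρ.cycleOf r ^ (((i : ℕ) + 1) % (ρ.toList r).length)) r :=
                (Equiv.Perm.cycleOf_pow_apply_self ρ r _).symm
            _ = (ρ.cycleOf r ^ ((i : ℕ) + 1)) r := step _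
            _ = (ρ ^ ((i : ℕ) + 1)) r := Equiv.Perm.cycleOf_pow_apply_self ρ r _
        rw [hmod, pow_succ', Equiv.Perm.mul_apply]
        exact hD ((ρ ^ (i : ℕ)) r)
  · rw [List.pairwise_map]
    have hnd : (Finset.univ.image rep).toList.Nodup := Finset.nodup_toList _
    refine List.Pairwise.imp_of_mem ?_ hnd
    intro a b ha hb hne w hwa hwb
    rw [Finset.mem_toList, Finset.mem_image] at ha hb
    obtain ⟨va, _, rfl⟩ := ha
    obtain ⟨vb, _, rfl⟩ := hb
    have h1 : rep w = rep va := (hrep_eq (rep va) w ((hLmem _ _).1 hwa)).trans (hrep_rep va)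
    have h2 : rep w = rep vb := (hrep_eq (rep vb) w ((hLmem _ _).1 hwb)).trans (hrep_rep vb)
    exact hne (h1.symm.trans h2)
  · intro v
    refine ⟨L (rep v), ?_, ?_⟩
    · simp only [List.mem_map]
      exact ⟨rep v, Finset.mem_toList.2 (Finset.mem_image.2 ⟨v, Finset.mem_univ v, rfl⟩), rfl⟩
    · rw [hLmem]
      rw [horb_eq v (rep v) (hrep_mem v)]
      exact horb_mem v

open Classical in
noncomputable def permF {n q : ℕ} (D : Fin n → Fin n → Prop) (P : Equiv.Perm (Fin n))
    (t2 : Fin q) (sw : Equiv.Perm (Fin q)) : (Fin n → Fin q) → Fin n → Fin q :=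
  fun x v => if (∀ u, D u v → u ≠ P v → x u = t2) then sw (x (P v)) else x (P v)

open Classical in
noncomputable def permG {n q : ℕ} (D : Fin n → Fin n → Prop) (P : Equiv.Perm (Fin n))
    (t2 : Fin q) (sw : Equiv.Perm (Fin q)) : (Fin n → Fin q) → Fin n → Fin q :=
  fun z u => if (∀ w, D w (P.symm u) → w ≠ u → z (P.symm w) = t2) then sw (z (P.symm u))
    else z (P.symm u)

lemma construct_dir {n q : ℕ} (hq : 3 ≤ q) {D : Fin n → Fin n → Prop} (P : Equiv.Perm (Fin n))
    (hD : ∀ v, D (P v) v) :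
    ∃ f : (Fin n → Fin q) → Fin n → Fin q, ExactIG D f ∧ Function.Bijective f := by
  classical
  have h2 : (2 : ℕ) < q := by omega
  have h1 : (1 : ℕ) < q := by omega
  have h0 : (0 : ℕ) < q := by omega
  set t2 : Fin q := ⟨2, h2⟩ with ht2
  set z0 : Fin q := ⟨0, h0⟩ with hz0
  set o1 : Fin q := ⟨1, h1⟩ with ho1
  have hne20 : t2 ≠ z0 := by simp [ht2, hz0, Fin.ext_iff]
  have hne21 : t2 ≠ o1 := by simp [ht2, ho1, Fin.ext_iff]
  have hne10 : o1 ≠ z0 := by simp [ho1, hz0, Fin.ext_iff]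
  set sw : Equiv.Perm (Fin q) := Equiv.swap z0 o1 with hswdef
  have hsw2 : sw t2 = t2 := Equiv.swap_apply_of_ne_of_ne hne20 hne21
  have hswz : sw z0 = o1 := Equiv.swap_apply_left _ _
  have hswiff : ∀ a : Fin q, sw a = t2 ↔ a = t2 :=
    fun a => ⟨fun h => sw.injective (h.trans hsw2.symm), fun h => h ▸ hsw2⟩
  have hswsw : ∀ a : Fin q, sw (sw a) = a := fun a => Equiv.swap_apply_self _ _ _
  set f := permF D P t2 sw with hf
  set g := permG D P t2 sw with hg
  have hfval : ∀ x v, f x v = if (∀ u, D u v → u ≠ P v → x u = t2) then sw (x (P v))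
      else x (P v) := fun x v => by
    rw [hf, permF]
  have hgval : ∀ z u, g z u = if (∀ w, D w (P.symm u) → w ≠ u → z (P.symm w) = t2)
      then sw (z (P.symm u)) else z (P.symm u) := fun z u => by
    rw [hg, permG]
  have hffix : ∀ x v, f x v = t2 ↔ x (P v) = t2 := by
    intro x v
    rw [hfval]
    split
    · exact hswiff _
    · exact Iff.rfl
  have hgfix : ∀ z u, g z u = t2 ↔ z (P.symm u) = t2 := by
    intro z u
    rw [hgval]
    split
    · exact hswiff _
    · exact Iff.rfl
  have hleft : ∀ x, g (f x) = x := by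
    intro x
    funext u
    have hPu : P (P.symm u) = u := P.apply_symm_apply u
    have hcond : (∀ w, D w (P.symm u) → w ≠ u → (f x) (P.symm w) = t2) ↔
        (∀ w, D w (P.symm u) → w ≠ P (P.symm u) → x w = t2) := by
      rw [hPu]
      apply forall_congr'
      intro w
      refine imp_congr Iff.rfl (imp_congr Iff.rfl ?_)
      rw [hffix, P.apply_symm_apply]
    rw [hgval]
    by_cases hc : ∀ w, D w (P.symm u) → w ≠ P (P.symm u) → x w = t2
    · rw [if_pos (hcond.mpr hc), hfval, if_pos hc, hPu, hswsw]
    · rw [if_neg (fun hh => hc (hcond.mp hh)), hfval, if_neg hc, hPu]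
  have hright : ∀ z, f (g z) = z := by
    intro z
    funext v
    have hPv : P.symm (P v) = v := P.symm_apply_apply v
    have hcond : (∀ u, D u v → u ≠ P v → (g z) u = t2) ↔
        (∀ w, D w (P.symm (P v)) → w ≠ P v → z (P.symm w) = t2) := by
      rw [hPv]
      apply forall_congr'
      intro w
      exact imp_congr Iff.rfl (imp_congr Iff.rfl (hgfix z w))
    rw [hfval]
    by_cases hc : ∀ w, D w (P.symm (P v)) → w ≠ P v → z (P.symm w) = t2
    · rw [if_pos (hcond.mpr hc), hgval, if_pos hc, hPv, hswsw]
    · rw [if_neg (fun hh => hc (hcond.mp hh)), hgval, if_neg hc, hPv]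
  refine ⟨f, ?_, Function.bijective_iff_has_inverse.mpr ⟨g, hleft, hright⟩⟩
  intro u v
  constructor
  · intro hIG
    by_contra hDuv
    obtain ⟨x, y, hxy, hne⟩ := hIG
    apply hne
    have hPvne : P v ≠ u := fun hh => hDuv (hh ▸ hD v)
    have hcond : (∀ w, D w v → w ≠ P v → x w = t2) ↔ (∀ w, D w v → w ≠ P v → y w = t2) := by
      apply forall_congr'
      intro w
      by_cases hw : D w v
      · have hwu : w ≠ u := fun hh => hDuv (hh ▸ hw)
        rw [hxy w hwu]
      · simp [hw]
    rw [hfval, hfval, hxy (P v) hPvne]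
    by_cases hc : ∀ w, D w v → w ≠ P v → x w = t2
    · rw [if_pos hc, if_pos (hcond.mp hc)]
    · rw [if_neg hc, if_neg (fun hh => hc (hcond.mpr hh))]
  · intro hDuv
    by_cases hu : u = P v
    · subst hu
      refine ⟨(fun _ => t2), Function.update (fun _ => t2) (P v) z0, ?_, ?_⟩
      · intro w hw
        rw [Function.update_of_ne hw]
      · have hx : f (fun _ => t2) v = t2 := by
          rw [hfval, if_pos (fun _ _ _ => rfl), hsw2]
        have hy : f (Function.update (fun _ => t2) (P v) z0) v = o1 := by
          rw [hfval, if_pos (fun w _ hw => by rw [Function.update_of_ne hw]),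
            Function.update_self, hswz]
        rw [hx, hy]
        exact hne21
    · refine ⟨(fun w => if w = P v then z0 else t2),
        Function.update (fun w => if w = P v then z0 else t2) u z0,
        fun w hw => by rw [Function.update_of_ne hw], ?_⟩
      have hx : f (fun w => if w = P v then z0 else t2) v = o1 := by
        rw [hfval, if_pos (fun w _ hw => by simp [hw]), if_pos rfl, hswz]
      have hy : f (Function.update (fun w => if w = P v then z0 else t2) u z0) v = z0 := by
        have hcond : ¬ (∀ w, D w v → w ≠ P v →
            Function.update (fun w => if w = P v then z0 else t2) u z0 w = t2) := by
          intro hh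
          have := hh u hDuv hu
          rw [Function.update_self] at this
          exact hne20 this.symm
        rw [hfval, if_neg hcond, Function.update_of_ne (Ne.symm hu)]
        simp
      rw [hx, hy]
      exact hne10

/-- for `q ≥ 3`, there is a permutation in `F[D,q]` iff all vertices of `D`
can be covered by pairwise vertex-disjoint cycles. -/
theorem reversible_parallel {n q : ℕ} (hn : 1 ≤ n) (hq : 3 ≤ q)
    (D : Fin n → Fin n → Prop) :
    (∃ f : (Fin n → Fin q) → Fin n → Fin q, ExactIG D f ∧ Function.Bijective f) ↔
      CoveredByDisjointCycles D := by
  constructor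
  · rintro ⟨f, hIG, hb⟩
    obtain ⟨σ, hinj, hDσ⟩ := hall_dir hq f hIG hb
    set E := Equiv.ofBijective σ (Finite.injective_iff_bijective.mp hinj) with hE
    apply cover_of_perm E.symm
    intro v
    have h1 : σ (E.symm v) = v := E.apply_symm_apply v
    have h2 := hDσ (E.symm v)
    rwa [h1] at h2
  · intro hcov
    obtain ⟨P, hP⟩ := perm_of_cover hcov
    exact construct_dir hq P hP
end

section
/- Let D be a digraph on vertex set V = {1,…,n}, let q ≥ 2 and p ≥ 1, and let f ∈ F(D,q). Then |Im(f^p)| ≤ q^{α_p(D)}. -/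
open Function

namespace MengerAux

variable {α : Type*} [DecidableEq α]

/-- A walk of length `m` in the digraph with arc set `E`. -/
def Wk (E : Finset (α × α)) (m : ℕ) (w : ℕ → α) : Prop :=
  ∀ i, i < m → (w i, w (i+1)) ∈ E

/-- A path from `A` to `B` of length `m`. -/
def Pth (E : Finset (α × α)) (A B : Finset α) (m : ℕ) (w : ℕ → α) : Prop :=
  Wk E m w ∧ (∀ i, i ≤ m → ∀ j, j ≤ m → w i = w j → i = j) ∧ w 0 ∈ A ∧ w m ∈ B

/-- `S` separates `A` from `B`. -/
def Sep (E : Finset (α × α)) (A B S : Finset α) : Prop :=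
  ∀ m w, Pth E A B m w → ∃ i, i ≤ m ∧ w i ∈ S

lemma Wk.mono {E E' : Finset (α × α)} (h : E ⊆ E') {m w} (hw : Wk E m w) : Wk E' m w :=
  fun i hi => h (hw i hi)

/-- Extract an injective path from a walk, keeping endpoints, vertices a subset. -/
lemma exists_path_of_walk (E : Finset (α × α)) :
    ∀ m w, Wk E m w →
    ∃ m' w', Wk E m' w' ∧ (∀ i, i ≤ m' → ∀ j, j ≤ m' → w' i = w' j → i = j) ∧
      w' 0 = w 0 ∧ w' m' = w m ∧ ∀ j, j ≤ m' → ∃ i, i ≤ m ∧ w' j = w i := by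
  intro m
  induction m using Nat.strong_induction_on with
  | _ m IH =>
    intro w hw
    by_cases hinj : ∀ i, i ≤ m → ∀ j, j ≤ m → w i = w j → i = j
    · exact ⟨m, w, hw, hinj, rfl, rfl, fun j hj => ⟨j, hj, rfl⟩⟩
    · push_neg at hinj
      obtain ⟨i, hi, j, hj, hij, hne⟩ := hinj
      -- wlog i < j
      obtain ⟨i, j, hi, hj, hij, hlt⟩ : ∃ i j, i ≤ m ∧ j ≤ m ∧ w i = w j ∧ i < j := by
        rcases Nat.lt_or_ge i j with h | h
        · exact ⟨i, j, hi, hj, hij, h⟩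
        · exact ⟨j, i, hj, hi, hij.symm, by omega⟩
      obtain ⟨d, hd1, hdj⟩ : ∃ d, 1 ≤ d ∧ j = i + d := ⟨j - i, by omega, by omega⟩
      set w2 : ℕ → α := fun t => if t ≤ i then w t else w (t + d) with hw2
      have hkey : ∀ t, w2 t = w t ∨ w2 t = w (t + d) := by
        intro t; by_cases h : t ≤ i <;> simp [hw2, h]
      have hwk : Wk E (m - d) w2 := by
        intro t ht
        by_cases h1 : t + 1 ≤ i
        · have h2 : t ≤ i := by omega
          have e1 : w2 t = w t := if_pos h2
          have e2 : w2 (t + 1) = w (t + 1) := if_pos h1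
          rw [e1, e2]; exact hw t (by omega)
        · by_cases h2 : t ≤ i
          · have hti : t = i := by omega
            have e1 : w2 t = w j := by
              rw [hw2]; simp only [hti, le_refl, if_pos]; exact hij
            have e2 : w2 (t + 1) = w (j + 1) := by
              rw [hw2]; simp only [if_neg h1]; congr 1; omega
            rw [e1, e2]; exact hw j (by omega)
          · have e1 : w2 t = w (t + d) := if_neg h2
            have e2 : w2 (t + 1) = w (t + d + 1) := by
              rw [hw2]; simp only [if_neg (show ¬ t + 1 ≤ i by omega)]; congr 1; omega
            rw [e1, e2]; exact hw (t + d) (by omega)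
      have hlast : w2 (m - d) = w m := by
        by_cases h : m - d ≤ i
        · have h1 : m - d = i := by omega
          have h2 : j = m := by omega
          have : w2 (m - d) = w i := by rw [hw2]; simp [h, h1]
          rw [this, hij, h2]
        · have : w2 (m - d) = w (m - d + d) := if_neg h
          rw [this]; congr 1; omega
      obtain ⟨m', w', h1, h2, h3, h4, h5⟩ := IH (m - d) (by omega) w2 hwk
      refine ⟨m', w', h1, h2, ?_, by rw [h4, hlast], ?_⟩
      · rw [h3]; simp [hw2]
      · intro t ht
        obtain ⟨s, hs, hss⟩ := h5 t ht
        rcases hkey s with h | h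
        · exact ⟨s, by omega, by rw [hss, h]⟩
        · exact ⟨s + d, by omega, by rw [hss, h]⟩

end MengerAux

namespace MengerAux2
open MengerAux

set_option linter.unusedSectionVars false
set_option maxHeartbeats 1000000

variable {α : Type*} [DecidableEq α]

lemma menger_base (A B : Finset α) (k : ℕ)
    (hsep : ∀ S, Sep (∅ : Finset (α × α)) A B S → k ≤ S.card) :
    ∃ (m : Fin k → ℕ) (w : Fin k → ℕ → α), (∀ i, Pth (∅ : Finset (α × α)) A B (m i) (w i)) ∧
      ∀ i j, i ≠ j → ∀ a, a ≤ m i → ∀ b, b ≤ m j → w i a ≠ w j b := by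
  have hAB : Sep (∅ : Finset (α × α)) A B (A ∩ B) := by
    rintro m w ⟨hw, hnd, hA, hB⟩
    have hm : m = 0 := by
      by_contra h
      have := hw 0 (by omega)
      simp at this
    subst hm
    exact ⟨0, le_refl _, Finset.mem_inter.2 ⟨hA, hB⟩⟩
  have hk : k ≤ (A ∩ B).card := hsep _ hAB
  obtain ⟨T, hTsub, hTcard⟩ := Finset.exists_subset_card_eq hk
  set g : Fin k → α := fun i => ((T.equivFin.symm (Fin.cast hTcard.symm i)) : α) with hg
  have hginj : Function.Injective g := by
    intro i j hij
    have := Subtype.ext hij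
    have := T.equivFin.symm.injective this
    simpa [Fin.ext_iff] using this
  have hgmem : ∀ i, g i ∈ A ∩ B := fun i => hTsub (T.equivFin.symm _).2
  refine ⟨fun _ => 0, fun i _ => g i, fun i => ⟨fun t ht => absurd ht (by simp), ?_, ?_, ?_⟩, ?_⟩
  · intro a ha b hb _; simp only [] at ha hb; omega
  · exact (Finset.mem_inter.1 (hgmem i)).1
  · exact (Finset.mem_inter.1 (hgmem i)).2
  · intro i j hij a _ b _ h
    exact hij (hginj h)

theorem menger : ∀ (N : ℕ) (E : Finset (α × α)), E.card ≤ N → ∀ (A B : Finset α) (k : ℕ),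
    (∀ S, Sep E A B S → k ≤ S.card) →
    ∃ (m : Fin k → ℕ) (w : Fin k → ℕ → α), (∀ i, Pth E A B (m i) (w i)) ∧
      ∀ i j, i ≠ j → ∀ a, a ≤ m i → ∀ b, b ≤ m j → w i a ≠ w j b := by
  intro N
  induction N with
  | zero =>
    intro E hE A B k hsep
    have : E = ∅ := Finset.card_eq_zero.1 (by omega)
    subst this
    exact menger_base A B k hsep
  | succ N IH =>
    intro E hE A B k hsep
    rcases Finset.eq_empty_or_nonempty E with hEe | ⟨e, he⟩
    · subst hEe; exact menger_base A B k hsep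
    obtain ⟨x, y⟩ := e
    set E' := E.erase (x, y) with hE'def
    have hE' : E'.card ≤ N := by
      rw [hE'def, Finset.card_erase_of_mem he]
      have hpos : 1 ≤ E.card := Finset.card_pos.2 ⟨_, he⟩
      omega
    have hE'sub : E' ⊆ E := Finset.erase_subset _ _
    -- every walk in E is a walk in E' or uses the arc (x,y)
    have walk_cases : ∀ m w, Wk E m w → Wk E' m w ∨ ∃ i, i < m ∧ w i = x ∧ w (i+1) = y := by
      intro m w hw
      by_cases h : ∃ i, i < m ∧ w i = x ∧ w (i+1) = y
      · exact Or.inr h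
      · push_neg at h
        left
        intro i hi
        refine Finset.mem_erase.2 ⟨?_, hw i hi⟩
        intro hcon
        have h1 : w i = x := congrArg Prod.fst hcon
        have h2 : w (i+1) = y := congrArg Prod.snd hcon
        exact (h i hi h1) h2
    by_cases hxy : x = y
    · -- loop: no nodup path uses it
      have hsep' : ∀ S, Sep E' A B S → k ≤ S.card := by
        intro S hS
        apply hsep
        rintro m w ⟨hw, hnd, hA, hB⟩
        apply hS m w
        refine ⟨?_, hnd, hA, hB⟩
        rcases walk_cases m w hw with h | ⟨i, hi, h1, h2⟩
        · exact h
        · exfalso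
          have : w i = w (i+1) := by rw [h1, h2, hxy]
          have := hnd i (by omega) (i+1) (by omega) this
          omega
      obtain ⟨m, w, hP, hdisj⟩ := IH E' hE' A B k hsep'
      exact ⟨m, w, fun i => ⟨(hP i).1.mono hE'sub, (hP i).2⟩, hdisj⟩
    -- main case
    by_cases hmin : ∀ S, Sep E' A B S → k ≤ S.card
    · obtain ⟨m, w, hP, hdisj⟩ := IH E' hE' A B k hmin
      exact ⟨m, w, fun i => ⟨(hP i).1.mono hE'sub, (hP i).2⟩, hdisj⟩
    push_neg at hmin
    obtain ⟨S, hS, hScard⟩ := hmin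
    -- insert x S and insert y S separate A from B in E
    have hsepx : Sep E A B (insert x S) := by
      rintro m w ⟨hw, hnd, hA, hB⟩
      rcases walk_cases m w hw with h | ⟨i, hi, h1, h2⟩
      · obtain ⟨i, hi, hmem⟩ := hS m w ⟨h, hnd, hA, hB⟩
        exact ⟨i, hi, Finset.mem_insert_of_mem hmem⟩
      · exact ⟨i, by omega, by rw [h1]; exact Finset.mem_insert_self _ _⟩
    have hsepy : Sep E A B (insert y S) := by
      rintro m w ⟨hw, hnd, hA, hB⟩
      rcases walk_cases m w hw with h | ⟨i, hi, h1, h2⟩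
      · obtain ⟨i, hi, hmem⟩ := hS m w ⟨h, hnd, hA, hB⟩
        exact ⟨i, hi, Finset.mem_insert_of_mem hmem⟩
      · exact ⟨i + 1, by omega, by rw [h2]; exact Finset.mem_insert_self _ _⟩
    have hxS : x ∉ S := by
      intro hmem
      have h1 := hsep _ hsepx
      rw [Finset.insert_eq_self.2 hmem] at h1
      omega
    have hyS : y ∉ S := by
      intro hmem
      have h1 := hsep _ hsepy
      rw [Finset.insert_eq_self.2 hmem] at h1
      omega
    have hkS : k = S.card + 1 := by
      have h1 := hsep _ hsepx
      have h2 : (insert x S).card = S.card + 1 := Finset.card_insert_of_notMem hxS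
      omega
    set X := insert x S with hXdef
    set Y := insert y S with hYdef
    have hXcard : X.card = k := by rw [hXdef, Finset.card_insert_of_notMem hxS]; omega
    have hYcard : Y.card = k := by rw [hYdef, Finset.card_insert_of_notMem hyS]; omega
    have hxX : x ∈ X := Finset.mem_insert_self _ _
    have hyY : y ∈ Y := Finset.mem_insert_self _ _
    have hSX : S ⊆ X := Finset.subset_insert _ _
    have hSY : S ⊆ Y := Finset.subset_insert _ _
    have hyX : y ∉ X := by
      intro h
      rcases Finset.mem_insert.1 h with h | h
      · exact hxy h.symm
      · exact hyS h
    have hxY : x ∉ Y := by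
      intro h
      rcases Finset.mem_insert.1 h with h | h
      · exact hxy h
      · exact hxS h
    -- every A-X separator of E' is an A-B separator of E
    have hsep1 : ∀ T, Sep E' A X T → k ≤ T.card := by
      intro T hT
      apply hsep
      rintro m w ⟨hw, hnd, hA, hB⟩
      have hex : ∃ i, i ≤ m ∧ w i ∈ X := by
        rcases walk_cases m w hw with h | ⟨i, hi, h1, h2⟩
        · obtain ⟨i, hi, hmem⟩ := hS m w ⟨h, hnd, hA, hB⟩
          exact ⟨i, hi, hSX hmem⟩
        · exact ⟨i, by omega, by rw [h1]; exact hxX⟩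
      classical
      obtain ⟨hi0m, hi0X⟩ := Nat.find_spec hex
      have hminX : ∀ t, t < Nat.find hex → w t ∉ X := by
        intro t ht hmem
        exact Nat.find_min hex ht ⟨by omega, hmem⟩
      have hp' : Pth E' A X (Nat.find hex) w := by
        refine ⟨?_, fun a ha b hb hab => hnd a (by omega) b (by omega) hab, hA, hi0X⟩
        intro t ht
        refine Finset.mem_erase.2 ⟨?_, hw t (by omega)⟩
        intro hcon
        have : w t = x := congrArg Prod.fst hcon
        exact hminX t ht (by rw [this]; exact hxX)
      obtain ⟨i, hi, hmem⟩ := hT _ w hp'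
      exact ⟨i, by omega, hmem⟩
    -- every Y-B separator of E' is an A-B separator of E
    have hsep2 : ∀ T, Sep E' Y B T → k ≤ T.card := by
      intro T hT
      apply hsep
      rintro m w ⟨hw, hnd, hA, hB⟩
      have hex : ∃ jj, w (m - jj) ∈ Y ∧ jj ≤ m := by
        rcases walk_cases m w hw with h | ⟨i, hi, h1, h2⟩
        · obtain ⟨i, hi, hmem⟩ := hS m w ⟨h, hnd, hA, hB⟩
          exact ⟨m - i, by rw [show m - (m - i) = i by omega]; exact hSY hmem, by omega⟩
        · refine ⟨m - (i + 1), ?_, by omega⟩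
          rw [show m - (m - (i + 1)) = i + 1 by omega, h2]
          exact hyY
      classical
      obtain ⟨hj0Y, hj0m⟩ := Nat.find_spec hex
      set i1 := m - Nat.find hex with hi1
      have hmaxY : ∀ t, i1 < t → t ≤ m → w t ∉ Y := by
        intro t ht1 ht2 hmem
        have hlt : m - t < Nat.find hex := by omega
        exact Nat.find_min hex hlt ⟨by rw [show m - (m - t) = t by omega]; exact hmem, by omega⟩
      have hp' : Pth E' Y B (m - i1) (fun t => w (i1 + t)) := by
        refine ⟨?_, ?_, ?_, ?_⟩
        · intro t ht
          refine Finset.mem_erase.2 ⟨?_, hw (i1 + t) (by omega)⟩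
          intro hcon
          have h2' : w (i1 + t + 1) = y := congrArg Prod.snd hcon
          exact hmaxY (i1 + t + 1) (by omega) (by omega) (by rw [h2']; exact hyY)
        · intro a ha b hb hab
          have := hnd (i1 + a) (by omega) (i1 + b) (by omega) hab
          omega
        · show w (i1 + 0) ∈ Y
          rw [Nat.add_zero]
          exact hj0Y
        · show w (i1 + (m - i1)) ∈ B
          rw [show i1 + (m - i1) = m by omega]
          exact hB
      obtain ⟨t, ht, hmem⟩ := hT _ _ hp'
      exact ⟨i1 + t, by omega, hmem⟩
    obtain ⟨mP, wP, hP, hPd⟩ := IH E' hE' A X k hsep1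
    obtain ⟨mQ, wQ, hQ, hQd⟩ := IH E' hE' Y B k hsep2
    have hPlast : ∀ i, wP i (mP i) ∈ X := fun i => (hP i).2.2.2
    have hQhead : ∀ i, wQ i 0 ∈ Y := fun i => (hQ i).2.2.1
    -- endpoint maps are bijections onto X and Y
    set eP : Fin k → {a // a ∈ X} := fun i => ⟨wP i (mP i), hPlast i⟩ with hePdef
    set eQ : Fin k → {a // a ∈ Y} := fun i => ⟨wQ i 0, hQhead i⟩ with heQdef
    have hePinj : Function.Injective eP := by
      intro i j h
      by_contra hne
      exact hPd i j hne (mP i) le_rfl (mP j) le_rfl (congrArg Subtype.val h)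
    have heQinj : Function.Injective eQ := by
      intro i j h
      by_contra hne
      exact hQd i j hne 0 (Nat.zero_le _) 0 (Nat.zero_le _) (congrArg Subtype.val h)
    have hePbij : Function.Bijective eP := by
      rw [Fintype.bijective_iff_injective_and_card]
      exact ⟨hePinj, by simp [Fintype.card_coe, hXcard]⟩
    have heQbij : Function.Bijective eQ := by
      rw [Fintype.bijective_iff_injective_and_card]
      exact ⟨heQinj, by simp [Fintype.card_coe, hYcard]⟩
    -- property (a): a P-path meets X only at its end
    have haP : ∀ i, ∀ t, t ≤ mP i → wP i t ∈ X → t = mP i := by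
      intro i t ht hmem
      obtain ⟨i', hi'⟩ := hePbij.surjective ⟨wP i t, hmem⟩
      have hval : wP i' (mP i') = wP i t := congrArg Subtype.val hi'
      by_cases hii : i' = i
      · subst hii
        exact ((hP i').2.1 (mP i') le_rfl t ht hval).symm
      · exact absurd hval (hPd i' i hii (mP i') le_rfl t ht)
    -- property (b): a Q-path meets Y only at its start
    have hbQ : ∀ i, ∀ t, t ≤ mQ i → wQ i t ∈ Y → t = 0 := by
      intro i t ht hmem
      obtain ⟨i', hi'⟩ := heQbij.surjective ⟨wQ i t, hmem⟩
      have hval : wQ i' 0 = wQ i t := congrArg Subtype.val hi'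
      by_cases hii : i' = i
      · subst hii
        exact ((hQ i').2.1 0 (Nat.zero_le _) t ht hval).symm
      · exact absurd hval (hQd i' i hii 0 (Nat.zero_le _) t ht)
    -- no S-free A-B walk exists in E'
    have noSfree : ∀ M u, Wk E' M u → u 0 ∈ A → u M ∈ B → (∀ t, t ≤ M → u t ∉ S) → False := by
      intro M u hu hA' hB' hfree
      obtain ⟨m', w', h1, h2, h3, h4, h5⟩ := exists_path_of_walk E' M u hu
      obtain ⟨t, ht, hmem⟩ := hS m' w' ⟨h1, h2, by rw [h3]; exact hA', by rw [h4]; exact hB'⟩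
      obtain ⟨s, hs, hss⟩ := h5 t ht
      exact hfree s hs (by rw [← hss]; exact hmem)
    -- gluing an S-free P-prefix with an S-free Q-suffix is impossible
    have glue_contra : ∀ i j a b, a ≤ mP i → b ≤ mQ j → wP i a = wQ j b →
        (∀ t, t ≤ a → wP i t ∉ S) → (∀ t, b ≤ t → t ≤ mQ j → wQ j t ∉ S) → False := by
      intro i j a b ha hb heq h1 h2
      set M := a + (mQ j - b) with hMdef
      set u : ℕ → α := fun t => if t ≤ a then wP i t else wQ j (t - a + b) with hudef
      apply noSfree M u ?_ ?_ ?_ ?_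
      · intro t ht
        by_cases hc1 : t + 1 ≤ a
        · have hc2 : t ≤ a := by omega
          have e1 : u t = wP i t := if_pos hc2
          have e2 : u (t + 1) = wP i (t + 1) := if_pos hc1
          rw [e1, e2]
          exact (hP i).1 t (by omega)
        · by_cases hc2 : t ≤ a
          · have e1 : u t = wQ j b := by
              have e0 : u t = wP i t := if_pos hc2
              rw [e0, show t = a by omega, heq]
            have e2 : u (t + 1) = wQ j (b + 1) := by
              rw [hudef]; simp only [if_neg hc1]; congr 1; omega
            rw [e1, e2]
            exact (hQ j).1 b (by omega)
          · have e1 : u t = wQ j (t - a + b) := if_neg hc2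
            have e2 : u (t + 1) = wQ j (t - a + b + 1) := by
              rw [hudef]; simp only [if_neg hc1]; congr 1; omega
            rw [e1, e2]
            exact (hQ j).1 (t - a + b) (by omega)
      · have : u 0 = wP i 0 := if_pos (Nat.zero_le _)
        rw [this]; exact (hP i).2.2.1
      · by_cases h : M ≤ a
        · have e1 : u M = wP i a := by
            have e0 : u M = wP i M := if_pos h
            rw [e0, show M = a by omega]
          rw [e1, heq, show b = mQ j by omega]
          exact (hQ j).2.2.2
        · have e1 : u M = wQ j (mQ j) := by
            rw [hudef]; simp only [if_neg h, show M - a + b = mQ j by omega]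
          rw [e1]
          exact (hQ j).2.2.2
      · intro t ht
        by_cases hc : t ≤ a
        · rw [show u t = wP i t from if_pos hc]; exact h1 t hc
        · rw [show u t = wQ j (t - a + b) from if_neg hc]
          exact h2 _ (by omega) (by omega)
    -- the crossing lemma: P-paths and Q-paths only meet end-to-head
    have hcc : ∀ i j a b, a ≤ mP i → b ≤ mQ j → wP i a = wQ j b → a = mP i ∧ b = 0 := by
      intro i j a b ha hb heq
      by_cases hzX : wP i a ∈ X
      · have haa : a = mP i := haP i a ha hzX
        by_cases hzY : wP i a ∈ Y
        · exact ⟨haa, hbQ j b hb (heq ▸ hzY)⟩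
        · have hzx : wP i a = x := by
            rcases Finset.mem_insert.1 hzX with h | h
            · exact h
            · exact absurd (hSY h) hzY
          refine ⟨haa, ?_⟩
          by_contra hb0
          apply glue_contra i j a b ha hb heq
          · intro t ht hmem
            have htm : t = mP i := haP i t (by omega) (hSX hmem)
            rw [htm, ← haa, hzx] at hmem
            exact hxS hmem
          · intro t htb htm hmem
            have := hbQ j t htm (hSY hmem)
            omega
      · have haa : a ≠ mP i := fun h => hzX (h ▸ hPlast i)
        exfalso
        apply glue_contra i j a b ha hb heq
        · intro t ht hmem
          have := haP i t (by omega) (hSX hmem)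
          omega
        · intro t htb htm hmem
          have ht0 : t = 0 := hbQ j t htm (hSY hmem)
          subst ht0
          have hb0 : b = 0 := by omega
          rw [← hb0, ← heq] at hmem
          exact hzX (hSX hmem)
    -- the matching between P-endpoints and Q-starts
    set equivQ := Equiv.ofBijective eQ heQbij with hequivQdef
    have hQ0 : ∀ c : {a // a ∈ Y}, wQ (equivQ.symm c) 0 = (c : α) := by
      intro c
      exact congrArg Subtype.val (equivQ.apply_symm_apply c)
    set μ : Fin k → Fin k := fun i =>
      if h : wP i (mP i) = x then equivQ.symm ⟨y, hyY⟩
      else equivQ.symm ⟨wP i (mP i), by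
        rcases Finset.mem_insert.1 (hPlast i) with h' | h'
        · exact absurd h' h
        · exact hSY h'⟩ with hμdef
    have hμ0 : ∀ i, wQ (μ i) 0 = if wP i (mP i) = x then y else wP i (mP i) := by
      intro i
      by_cases h : wP i (mP i) = x
      · rw [if_pos h]
        simp only [hμdef, dif_pos h]
        exact hQ0 _
      · rw [if_neg h]
        simp only [hμdef, dif_neg h]
        exact hQ0 _
    have hμinj : Function.Injective μ := by
      intro i i' h
      have h0 : wQ (μ i) 0 = wQ (μ i') 0 := by rw [h]
      rw [hμ0, hμ0] at h0
      by_cases h1 : wP i (mP i) = x <;> by_cases h2 : wP i' (mP i') = x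
      · exact hePinj (Subtype.ext (show wP i (mP i) = wP i' (mP i') by rw [h1, h2]))
      · rw [if_pos h1, if_neg h2] at h0
        exact absurd (by rw [h0]; exact hPlast i') hyX
      · rw [if_neg h1, if_pos h2] at h0
        have := hPlast i
        rw [h0] at this
        exact absurd this hyX
      · rw [if_neg h1, if_neg h2] at h0
        exact hePinj (Subtype.ext h0)
    set cf : Fin k → ℕ := fun i => if wP i (mP i) = x then 1 else 0 with hcfdef
    have hcf01 : ∀ i, cf i ≤ 1 := by
      intro i
      by_cases h : wP i (mP i) = x <;> simp [hcfdef, h]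
    set MM : Fin k → ℕ := fun i => mP i + cf i + mQ (μ i) with hMMdef
    set uu : Fin k → ℕ → α := fun i t =>
      if t ≤ mP i then wP i t else wQ (μ i) (t - mP i - cf i) with huudef
    -- cross intersections are impossible
    have hcross : ∀ i j b, mP j < b → b ≤ MM j → ∀ a, a ≤ mP i →
        wP i a ≠ wQ (μ j) (b - mP j - cf j) := by
      intro i j b hb1 hb2 a ha heq
      have hMM : MM j = mP j + cf j + mQ (μ j) := rfl
      have hidx : b - mP j - cf j ≤ mQ (μ j) := by omega
      obtain ⟨ha', hb0⟩ := hcc i (μ j) a _ ha hidx heq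
      by_cases hjx : wP j (mP j) = x
      · have hcf1 : cf j = 1 := by simp [hcfdef, hjx]
        have hy' : wQ (μ j) (b - mP j - cf j) = y := by
          rw [hb0, hμ0 j, if_pos hjx]
        have : y ∈ X := by rw [← hy', ← heq, ha']; exact hPlast i
        exact hyX this
      · have hcf0 : cf j = 0 := by simp [hcfdef, hjx]
        omega
    -- each glued walk is a path of E from A to B
    have hglue : ∀ i, Pth E A B (MM i) (uu i) := by
      intro i
      have hMM : MM i = mP i + cf i + mQ (μ i) := rfl
      have h3 := hcf01 i
      refine ⟨?_, ?_, ?_, ?_⟩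
      · intro t ht
        by_cases h1 : t + 1 ≤ mP i
        · have h2 : t ≤ mP i := by omega
          rw [show uu i t = wP i t from if_pos h2,
            show uu i (t+1) = wP i (t+1) from if_pos h1]
          exact ((hP i).1.mono hE'sub) t (by omega)
        · by_cases h2 : t ≤ mP i
          · have hti : t = mP i := by omega
            have e1 : uu i t = wP i (mP i) := by
              rw [show uu i t = wP i t from if_pos h2, hti]
            by_cases hix : wP i (mP i) = x
            · have hcf1 : cf i = 1 := by simp [hcfdef, hix]
              have e2 : uu i (t+1) = wQ (μ i) 0 := by
                rw [show uu i (t+1) = wQ (μ i) (t + 1 - mP i - cf i) from if_neg h1]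
                congr 1
                omega
              have e3 : wQ (μ i) 0 = y := by rw [hμ0 i, if_pos hix]
              rw [e1, e2, e3, hix]
              exact he
            · have hcf0 : cf i = 0 := by simp [hcfdef, hix]
              have e2 : uu i (t+1) = wQ (μ i) 1 := by
                rw [show uu i (t+1) = wQ (μ i) (t + 1 - mP i - cf i) from if_neg h1]
                congr 1
                omega
              have e1' : uu i t = wQ (μ i) 0 := by rw [e1, hμ0 i, if_neg hix]
              rw [e1', e2]
              exact hE'sub ((hQ (μ i)).1 0 (by omega))
          · have e1 : uu i t = wQ (μ i) (t - mP i - cf i) := if_neg h2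
            have e2 : uu i (t+1) = wQ (μ i) (t - mP i - cf i + 1) := by
              rw [show uu i (t+1) = wQ (μ i) (t + 1 - mP i - cf i) from if_neg h1]
              congr 1
              omega
            rw [e1, e2]
            exact hE'sub ((hQ (μ i)).1 (t - mP i - cf i) (by omega))
      · intro a ha b hb hab
        by_cases h1 : a ≤ mP i <;> by_cases h2 : b ≤ mP i
        · refine (hP i).2.1 a h1 b h2 ?_
          rwa [show uu i a = wP i a from if_pos h1,
            show uu i b = wP i b from if_pos h2] at hab
        · exfalso
          rw [show uu i a = wP i a from if_pos h1,
            show uu i b = wQ (μ i) (b - mP i - cf i) from if_neg h2] at hab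
          exact hcross i i b (by omega) hb a h1 hab
        · exfalso
          rw [show uu i b = wP i b from if_pos h2,
            show uu i a = wQ (μ i) (a - mP i - cf i) from if_neg h1] at hab
          exact hcross i i a (by omega) ha b h2 hab.symm
        · rw [show uu i a = wQ (μ i) (a - mP i - cf i) from if_neg h1,
            show uu i b = wQ (μ i) (b - mP i - cf i) from if_neg h2] at hab
          have := (hQ (μ i)).2.1 _ (show a - mP i - cf i ≤ mQ (μ i) by omega)
            _ (show b - mP i - cf i ≤ mQ (μ i) by omega) hab
          omega
      · have e0 : uu i 0 = wP i 0 := if_pos (Nat.zero_le _)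
        rw [e0]
        exact (hP i).2.2.1
      · by_cases h : MM i ≤ mP i
        · have hcf0 : cf i = 0 := by omega
          have hmq0 : mQ (μ i) = 0 := by omega
          have hMMi : MM i = mP i := by omega
          have e1 : uu i (MM i) = wP i (mP i) := by
            rw [show uu i (MM i) = wP i (MM i) from if_pos h, hMMi]
          have hix : ¬ wP i (mP i) = x := by
            intro hx
            simp [hcfdef, hx] at hcf0
          have e2 : wP i (mP i) = wQ (μ i) 0 := by rw [hμ0 i, if_neg hix]
          rw [e1, e2, show (0:ℕ) = mQ (μ i) from hmq0.symm]
          exact (hQ (μ i)).2.2.2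
        · have e1 : uu i (MM i) = wQ (μ i) (MM i - mP i - cf i) := if_neg h
          rw [e1, show MM i - mP i - cf i = mQ (μ i) by omega]
          exact (hQ (μ i)).2.2.2
    refine ⟨MM, uu, hglue, ?_⟩
    intro i j hij a ha b hb heq
    have hMMi : MM i = mP i + cf i + mQ (μ i) := rfl
    have hMMj : MM j = mP j + cf j + mQ (μ j) := rfl
    have h3 := hcf01 i
    have h4 := hcf01 j
    by_cases h1 : a ≤ mP i <;> by_cases h2 : b ≤ mP j
    · rw [show uu i a = wP i a from if_pos h1,
        show uu j b = wP j b from if_pos h2] at heq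
      exact hPd i j hij a h1 b h2 heq
    · rw [show uu i a = wP i a from if_pos h1,
        show uu j b = wQ (μ j) (b - mP j - cf j) from if_neg h2] at heq
      exact hcross i j b (by omega) hb a h1 heq
    · rw [show uu j b = wP j b from if_pos h2,
        show uu i a = wQ (μ i) (a - mP i - cf i) from if_neg h1] at heq
      exact hcross j i a (by omega) ha b h2 heq.symm
    · rw [show uu i a = wQ (μ i) (a - mP i - cf i) from if_neg h1,
        show uu j b = wQ (μ j) (b - mP j - cf j) from if_neg h2] at heq
      exact hQd (μ i) (μ j) (fun hh => hij (hμinj hh)) _ (by omega) _ (by omega) heq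




end MengerAux2

/-- for `q ≥ 2`, `p ≥ 1` and `f ∈ F(D,q)`, `|Im(f^p)| ≤ q ^ α_p(D)`. -/
theorem rank_iterate_upper_bound {n p q : ℕ} (hn : 1 ≤ n) (hp : 1 ≤ p) (hq : 2 ≤ q)
    (D : Fin n → Fin n → Prop)
    (f : (Fin n → Fin q) → Fin n → Fin q) (hf : SubIG D f) :
    Nat.card (Set.range (f^[p])) ≤ q ^ alphaWalks D p := by
  classical
  -- the layered digraph on ℕ × Fin n
  set E : Finset ((ℕ × Fin n) × (ℕ × Fin n)) :=
    Finset.filter (fun a => a.2.1 = a.1.1 + 1 ∧ D a.1.2 a.2.2)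
      ((Finset.range p ×ˢ (Finset.univ : Finset (Fin n))) ×ˢ
        (Finset.range (p+1) ×ˢ (Finset.univ : Finset (Fin n)))) with hEdef
  set A : Finset (ℕ × Fin n) :=
    (Finset.univ : Finset (Fin n)).image (fun v => ((0:ℕ), v)) with hAdef
  set B : Finset (ℕ × Fin n) :=
    (Finset.univ : Finset (Fin n)).image (fun v => (p, v)) with hBdef
  have hmemE : ∀ a b : ℕ × Fin n, (a, b) ∈ E ↔ (a.1 < p ∧ b.1 = a.1 + 1 ∧ D a.2 b.2) := by
    intro a b
    rw [hEdef, Finset.mem_filter]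
    simp only [Finset.mem_product, Finset.mem_range, Finset.mem_univ, and_true]
    constructor
    · rintro ⟨⟨h1, h2⟩, h3, h4⟩
      exact ⟨h1, h3, h4⟩
    · rintro ⟨h1, h3, h4⟩
      exact ⟨⟨h1, by omega⟩, h3, h4⟩
  have hmemA : ∀ a : ℕ × Fin n, a ∈ A ↔ a.1 = 0 := by
    intro a
    rw [hAdef, Finset.mem_image]
    constructor
    · rintro ⟨v, _, rfl⟩; rfl
    · intro h
      exact ⟨a.2, Finset.mem_univ _, by rw [← h]⟩
  have hmemB : ∀ a : ℕ × Fin n, a ∈ B ↔ a.1 = p := by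
    intro a
    rw [hBdef, Finset.mem_image]
    constructor
    · rintro ⟨v, _, rfl⟩; rfl
    · intro h
      exact ⟨a.2, Finset.mem_univ _, by rw [← h]⟩
  -- the coordinate functions only depend on in-neighbours
  have hcoord : ∀ v : Fin n, ∀ z z' : Fin n → Fin q,
      (∀ u, D u v → z u = z' u) → f z v = f z' v := by
    intro v
    have main : ∀ (N : ℕ) (z z' : Fin n → Fin q),
        (Finset.univ.filter (fun u => z u ≠ z' u)).card ≤ N →
        (∀ u, D u v → z u = z' u) → f z v = f z' v := by
      intro N
      induction N with
      | zero =>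
        intro z z' hc _
        have hz : z = z' := by
          funext u
          by_contra hne
          have hu : u ∈ Finset.univ.filter (fun u => z u ≠ z' u) :=
            Finset.mem_filter.2 ⟨Finset.mem_univ _, hne⟩
          have := Finset.card_pos.2 ⟨u, hu⟩
          omega
        rw [hz]
      | succ N IH =>
        intro z z' hc hagree
        by_cases hall : ∀ u, z u = z' u
        · rw [funext hall]
        · push_neg at hall
          obtain ⟨u, hu⟩ := hall
          have hDuv : ¬ D u v := fun h => hu (hagree u h)
          set z'' := Function.update z u (z' u) with hz''def
          have h1 : f z v = f z'' v := by
            by_contra hne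
            exact hDuv (hf u v ⟨z, z'',
              fun w hw => (Function.update_of_ne hw _ _).symm, hne⟩)
          rw [h1]
          apply IH z'' z'
          · have hsub : (Finset.univ.filter (fun w => z'' w ≠ z' w)) ⊆
                (Finset.univ.filter (fun w => z w ≠ z' w)).erase u := by
              intro w hw
              have hw' : z'' w ≠ z' w := (Finset.mem_filter.1 hw).2
              have hwu : w ≠ u := by
                intro h
                subst h
                exact hw' (Function.update_self _ _ _)
              refine Finset.mem_erase.2 ⟨hwu, Finset.mem_filter.2 ⟨Finset.mem_univ _, ?_⟩⟩
              rwa [hz''def, Function.update_of_ne hwu] at hw'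
            have hmem : u ∈ Finset.univ.filter (fun w => z w ≠ z' w) :=
              Finset.mem_filter.2 ⟨Finset.mem_univ _, hu⟩
            have := Finset.card_le_card hsub
            rw [Finset.card_erase_of_mem hmem] at this
            omega
          · intro u' hD
            have hu'u : u' ≠ u := fun h => hDuv (h ▸ hD)
            rw [hz''def, Function.update_of_ne hu'u]
            exact hagree u' hD
    intro z z' h
    exact main _ z z' le_rfl h
  by_cases hex : ∃ S : Finset (ℕ × Fin n),
      MengerAux.Sep E A B S ∧ S.card ≤ alphaWalks D p
  · -- a small cut: the image of f^[p] is determined by the coordinates in the cut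
    obtain ⟨S, hSsep, hScard⟩ := hex
    have hcut : ∀ w : ℕ → Fin n, (∀ i, i < p → D (w i) (w (i+1))) →
        ∃ i, i ≤ p ∧ (i, w i) ∈ S := by
      intro w hw
      have hp' : MengerAux.Pth E A B p (fun i => (i, w i)) := by
        refine ⟨?_, ?_, ?_, ?_⟩
        · intro i hi
          exact (hmemE (i, w i) (i+1, w (i+1))).2 ⟨hi, rfl, hw i hi⟩
        · intro a _ b _ hab
          exact congrArg Prod.fst hab
        · exact (hmemA (0, w 0)).2 rfl
        · exact (hmemB (p, w p)).2 rfl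
      obtain ⟨i, hi, hmem⟩ := hSsep p _ hp'
      exact ⟨i, hi, hmem⟩
    -- the key determination lemma
    have key : ∀ (x y : Fin n → Fin q),
        (∀ a : ℕ × Fin n, a ∈ S → f^[a.1] x a.2 = f^[a.1] y a.2) →
        ∀ s, ∀ v : Fin n,
          (∀ w : ℕ → Fin n, (∀ i, i < s → D (w i) (w (i+1))) → w s = v →
            ∃ t, t ≤ s ∧ (t, w t) ∈ S) →
          f^[s] x v = f^[s] y v := by
      intro x y hxy s
      induction s with
      | zero =>
        intro v hv
        obtain ⟨t, ht, hmem⟩ := hv (fun _ => v) (fun i hi => absurd hi (by omega)) rfl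
        have ht0 : t = 0 := by omega
        subst ht0
        exact hxy (0, v) hmem
      | succ s IH =>
        intro v hv
        by_cases hvS : ((s+1 : ℕ), v) ∈ S
        · exact hxy (s+1, v) hvS
        · rw [Function.iterate_succ_apply' f s x, Function.iterate_succ_apply' f s y]
          apply hcoord v
          intro u hDuv
          apply IH u
          intro w hw hws
          set w' : ℕ → Fin n := fun i => if i ≤ s then w i else v with hw'def
          have hw'walk : ∀ i, i < s+1 → D (w' i) (w' (i+1)) := by
            intro i hi
            by_cases h1 : i + 1 ≤ s
            · have h2 : i ≤ s := by omega
              rw [show w' i = w i from if_pos h2, show w' (i+1) = w (i+1) from if_pos h1]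
              exact hw i (by omega)
            · have hi' : i = s := by omega
              have e1 : w' i = u := by
                rw [show w' i = w i from if_pos (by omega), hi', hws]
              have e2 : w' (i+1) = v := if_neg (by omega)
              rw [e1, e2]
              exact hDuv
          have hw's : w' (s+1) = v := if_neg (by omega)
          obtain ⟨t, ht, hmem⟩ := hv w' hw'walk hw's
          by_cases hts : t ≤ s
          · refine ⟨t, hts, ?_⟩
            rwa [show w' t = w t from if_pos hts] at hmem
          · have htt : t = s + 1 := by omega
            subst htt
            rw [hw's] at hmem
            exact absurd hmem hvS
    -- counting through the cut
    set φ : (Fin n → Fin q) → ({a // a ∈ S} → Fin q) :=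
      fun x a => f^[a.1.1] x a.1.2 with hφdef
    have hkeyφ : ∀ x y, φ x = φ y → f^[p] x = f^[p] y := by
      intro x y hphi
      funext v
      refine key x y (fun a ha => congrFun hphi ⟨a, ha⟩) p v ?_
      intro w hw _
      exact hcut w hw
    have h1 : Nat.card (Set.range (f^[p])) ≤ Nat.card (Set.range φ) := by
      set g : Set.range φ → Set.range (f^[p]) :=
        fun c => ⟨f^[p] (Classical.choose c.2), ⟨Classical.choose c.2, rfl⟩⟩ with hgdef
      have hgsurj : Function.Surjective g := by
        rintro ⟨z, x, rfl⟩
        refine ⟨⟨φ x, ⟨x, rfl⟩⟩, ?_⟩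
        have hspec := Classical.choose_spec (show ∃ x', φ x' = φ x from ⟨x, rfl⟩)
        exact Subtype.ext (hkeyφ _ x hspec)
      exact Nat.card_le_card_of_surjective g hgsurj
    have h2 : Nat.card (Set.range φ) ≤ q ^ S.card := by
      have hle : Nat.card (Set.range φ) ≤ Nat.card ({a // a ∈ S} → Fin q) :=
        Nat.card_le_card_of_injective (Subtype.val : Set.range φ → _) Subtype.val_injective
      have hcard : Nat.card ({a // a ∈ S} → Fin q) = q ^ S.card := by
        rw [Nat.card_fun, Nat.card_eq_fintype_card, Nat.card_eq_fintype_card,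
          Fintype.card_coe, Fintype.card_fin]
      omega
    have h3 : q ^ S.card ≤ q ^ alphaWalks D p :=
      Nat.pow_le_pow_right (by omega) hScard
    omega
  · -- no small cut: Menger gives too many independent walks
    exfalso
    push_neg at hex
    obtain ⟨m, w, hPth, hdisj⟩ := MengerAux2.menger E.card E le_rfl A B
      (alphaWalks D p + 1) (fun S hS => hex S hS)
    have hfst : ∀ i, ∀ t, t ≤ m i → (w i t).1 = t := by
      intro i t
      induction t with
      | zero =>
        intro _
        exact (hmemA _).1 (hPth i).2.2.1
      | succ t IHt =>
        intro h
        have harc := (hPth i).1 t (by omega)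
        have := ((hmemE _ _).1 harc).2.1
        rw [IHt (by omega)] at this
        exact this
    have hm : ∀ i, m i = p := by
      intro i
      have h1 := (hmemB _).1 (hPth i).2.2.2
      have h2 := hfst i (m i) le_rfl
      omega
    set W : Fin (alphaWalks D p + 1) → Fin (p + 1) → Fin n :=
      fun i s => (w i (s : ℕ)).2 with hWdef
    have hPW : ∀ i, IsPWalk D p (W i) := by
      intro i s
      have harc := (hPth i).1 (s : ℕ) (by rw [hm i]; exact s.2)
      have hD := ((hmemE _ _).1 harc).2.2
      have e1 : ((s.castSucc : Fin (p+1)) : ℕ) = (s : ℕ) := rfl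
      have e2 : ((s.succ : Fin (p+1)) : ℕ) = (s : ℕ) + 1 := rfl
      show D (w i ((s.castSucc : Fin (p+1)) : ℕ)).2 (w i ((s.succ : Fin (p+1)) : ℕ)).2
      rw [e1, e2]
      exact hD
    have hind : ∀ i j, i ≠ j → ∀ s, W i s ≠ W j s := by
      intro i j hij s heq
      have hs : (s : ℕ) ≤ m i := by rw [hm i]; omega
      have hs' : (s : ℕ) ≤ m j := by rw [hm j]; omega
      refine hdisj i j hij (s : ℕ) hs (s : ℕ) hs' ?_
      have hf1 : (w i (s : ℕ)).1 = (w j (s : ℕ)).1 := by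
        rw [hfst i _ hs, hfst j _ hs']
      exact Prod.ext hf1 heq
    have hbdd : BddAbove {k : ℕ | ∃ W : Fin k → Fin (p + 1) → Fin n,
        (∀ i, IsPWalk D p (W i)) ∧ ∀ i j : Fin k, i ≠ j → ∀ s, W i s ≠ W j s} := by
      refine ⟨n, ?_⟩
      rintro k ⟨W', _, hind'⟩
      have hinj : Function.Injective (fun i => W' i 0) := by
        intro i j hij
        by_contra hne
        exact hind' i j hne 0 hij
      have := Fintype.card_le_of_injective _ hinj
      simpa using this
    have hle : alphaWalks D p + 1 ≤ alphaWalks D p := by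
      refine le_csSup hbdd ?_
      exact ⟨W, hPW, hind⟩
    omega
end

section
/- Let D be a digraph on vertex set V = {1,…,n} such that α_1(D) = n and every vertex of D has in-degree exactly 2. Then for every f ∈ F[D,2] and every p ≥ 1, |Im(f^p)| < 2^{α_p(D)}. -/
open Function

section AuxNRB

variable {n : ℕ}

private lemma nrb_depends_only {q : ℕ} (f : (Fin n → Fin q) → Fin n → Fin q) (v : Fin n)
    (S : Finset (Fin n)) (h : ∀ u, u ∉ S → ¬ IG f u v) :
    ∀ x y : Fin n → Fin q, (∀ u ∈ S, x u = y u) → f x v = f y v := by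
  have key : ∀ T : Finset (Fin n), ∀ x y : Fin n → Fin q,
      (∀ u, x u ≠ y u → u ∈ T) → (∀ u ∈ S, x u = y u) → f x v = f y v := by
    intro T
    induction T using Finset.strongInduction with
    | _ T ih =>
      intro x y hT hS
      by_cases hd : ∀ u, x u = y u
      · rw [funext hd]
      · push_neg at hd
        obtain ⟨u, hu⟩ := hd
        have huS : u ∉ S := fun h' => hu (hS u h')
        have huT : u ∈ T := hT u hu
        have h1 : f x v = f (Function.update x u (y u)) v := by
          by_contra hne
          exact h u huS ⟨x, Function.update x u (y u),
            fun w hw => (Function.update_of_ne hw _ _).symm, hne⟩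
        rw [h1]
        refine ih (T.erase u) (Finset.erase_ssubset huT) _ y ?_ ?_
        · intro w hw
          by_cases hwu : w = u
          · subst hwu; simp [Function.update_self] at hw
          · refine Finset.mem_erase.2 ⟨hwu, hT w ?_⟩
            rwa [Function.update_of_ne hwu] at hw
        · intro w hwS
          by_cases hwu : w = u
          · subst hwu; simp
          · rw [Function.update_of_ne hwu]; exact hS w hwS
  intro x y hxy
  exact key Finset.univ x y (fun u _ => Finset.mem_univ u) hxy

private lemma nrb_card_shift (u1 u2 : Fin n) (h : u1 ≠ u2) (a b : Fin 2) :
    (Finset.univ.filter fun x : Fin n → Fin 2 => x u1 = a ∧ x u2 = b).card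
      = (Finset.univ.filter fun x : Fin n → Fin 2 => x u1 = 0 ∧ x u2 = 0).card := by
  have hadd : ∀ c d : Fin 2, c + d + d = c := by decide
  have hcc : ∀ c : Fin 2, c + c = 0 := by decide
  have hzc : ∀ c : Fin 2, (0 : Fin 2) + c = c := by decide
  have h' : ¬ (u2 = u1) := fun hh => h hh.symm
  set σ : (Fin n → Fin 2) → (Fin n → Fin 2) :=
    fun x w => if w = u1 then x w + a else if w = u2 then x w + b else x w with hσ
  have hinv : ∀ x, σ (σ x) = x := by
    intro x; funext w
    by_cases hw1 : w = u1
    · subst hw1; simp [hσ, h', hadd]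
    · by_cases hw2 : w = u2
      · subst hw2; simp [hσ, h', hadd, hw1]
      · simp [hσ, hw1, hw2]
  have hs1 : ∀ x, σ x u1 = x u1 + a := by intro x; simp [hσ]
  have hs2 : ∀ x, σ x u2 = x u2 + b := by intro x; simp [hσ, h']
  refine Finset.card_bij' (fun x _ => σ x) (fun x _ => σ x) ?_ ?_ ?_ ?_
  · intro x hx
    simp only [Finset.mem_filter, Finset.mem_univ, true_and] at hx ⊢
    rw [hs1, hs2, hx.1, hx.2]; exact ⟨hcc a, hcc b⟩
  · intro x hx
    simp only [Finset.mem_filter, Finset.mem_univ, true_and] at hx ⊢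
    rw [hs1, hs2, hx.1, hx.2]; exact ⟨hzc a, hzc b⟩
  · intro x _; exact hinv x
  · intro x _; exact hinv x

private lemma nrb_card_shift1 (v : Fin n) (c : Fin 2) :
    (Finset.univ.filter fun x : Fin n → Fin 2 => x v = c).card
      = (Finset.univ.filter fun x : Fin n → Fin 2 => x v = 0).card := by
  have hadd : ∀ d e : Fin 2, d + e + e = d := by decide
  have hcc : ∀ d : Fin 2, d + d = 0 := by decide
  have hzc : ∀ d : Fin 2, (0 : Fin 2) + d = d := by decide
  set σ : (Fin n → Fin 2) → (Fin n → Fin 2) :=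
    fun x w => if w = v then x w + c else x w with hσ
  have hinv : ∀ x, σ (σ x) = x := by
    intro x; funext w
    by_cases hw : w = v
    · subst hw; simp [hσ, hadd]
    · simp [hσ, hw]
  have hs : ∀ x, σ x v = x v + c := by intro x; simp [hσ]
  refine Finset.card_bij' (fun x _ => σ x) (fun x _ => σ x) ?_ ?_ ?_ ?_
  · intro x hx
    simp only [Finset.mem_filter, Finset.mem_univ, true_and] at hx ⊢
    rw [hs, hx]; exact hcc c
  · intro x hx
    simp only [Finset.mem_filter, Finset.mem_univ, true_and] at hx ⊢
    rw [hs, hx]; exact hzc c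
  · intro x _; exact hinv x
  · intro x _; exact hinv x

private lemma nrb_split_card (s : Finset (Fin n → Fin 2)) (w : Fin n) :
    s.card = (s.filter fun x => x w = 0).card + (s.filter fun x => x w = 1).card := by
  rw [← Finset.card_filter_add_card_filter_not (p := fun x => x w = 0)]
  congr 2
  apply Finset.filter_congr
  intro x _
  have : ∀ d : Fin 2, ¬ d = 0 ↔ d = 1 := by decide
  simp [this]

private lemma nrb_gclass : ∀ g : Fin 2 → Fin 2 → Fin 2,
    ((if g 0 0 = 0 then 1 else 0) + (if g 0 1 = 0 then 1 else 0)
      + (if g 1 0 = 0 then 1 else 0) + (if g 1 1 = 0 then 1 else 0)) = 2 →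
    (∃ b, g 0 b ≠ g 1 b) → (∃ a, g a 0 ≠ g a 1) →
    ∀ a b, g (a + 1) (b + 1) = g a b := by decide

private lemma nrb_walkSet_bdd (D : Fin n → Fin n → Prop) (p : ℕ) :
    BddAbove {k : ℕ | ∃ W : Fin k → Fin (p + 1) → Fin n,
    (∀ i, IsPWalk D p (W i)) ∧ ∀ i j : Fin k, i ≠ j → ∀ s, W i s ≠ W j s} := by
  refine ⟨n, fun k hk => ?_⟩
  obtain ⟨W, -, hind⟩ := hk
  have hinj : Function.Injective (fun i => W i 0) := by
    intro i j hij
    by_contra hne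
    exact hind i j hne 0 hij
  simpa using Fintype.card_le_of_injective _ hinj

private lemma nrb_walkSet_nonempty (D : Fin n → Fin n → Prop) (p : ℕ) :
    Set.Nonempty {k : ℕ | ∃ W : Fin k → Fin (p + 1) → Fin n,
    (∀ i, IsPWalk D p (W i)) ∧ ∀ i j : Fin k, i ≠ j → ∀ s, W i s ≠ W j s} :=
  ⟨0, Fin.elim0, fun i => i.elim0, fun i => i.elim0⟩

private lemma nrb_perm_of_alpha_one (D : Fin n → Fin n → Prop) (ha : alphaWalks D 1 = n) :
    ∃ π : Equiv.Perm (Fin n), ∀ v, D v (π v) := by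
  have hmem := Nat.sSup_mem (nrb_walkSet_nonempty D 1) (nrb_walkSet_bdd D 1)
  rw [alphaWalks] at ha
  rw [ha] at hmem
  obtain ⟨W, hwalk, hind⟩ := hmem
  have hinj0 : Function.Injective (fun i => W i 0) := by
    intro i j hij; by_contra hne; exact hind i j hne 0 hij
  have hinj1 : Function.Injective (fun i => W i 1) := by
    intro i j hij; by_contra hne; exact hind i j hne 1 hij
  let e0 := Equiv.ofBijective _ (Finite.injective_iff_bijective.1 hinj0)
  let e1 := Equiv.ofBijective _ (Finite.injective_iff_bijective.1 hinj1)
  refine ⟨e0.symm.trans e1, fun v => ?_⟩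
  have h0 : W (e0.symm v) 0 = v := e0.apply_symm_apply v
  have h1 : (e0.symm.trans e1) v = W (e0.symm v) 1 := rfl
  have key : D (W (e0.symm v) 0) (W (e0.symm v) 1) := by simpa using hwalk (e0.symm v) 0
  rw [h0] at key
  rw [h1]; exact key

private lemma nrb_alpha_ge (D : Fin n → Fin n → Prop) (π : Equiv.Perm (Fin n))
    (hπ : ∀ v, D v (π v)) (p : ℕ) : n ≤ alphaWalks D p := by
  apply le_csSup (nrb_walkSet_bdd D p)
  refine ⟨fun i s => (π : Fin n → Fin n)^[(s : ℕ)] i, fun i s => ?_, fun i j hij s => ?_⟩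
  · have h1 : ((s.succ : Fin (p+1)) : ℕ) = (s : ℕ) + 1 := rfl
    have h2 : ((s.castSucc : Fin (p+1)) : ℕ) = (s : ℕ) := rfl
    simp only [h1, h2, Function.iterate_succ_apply']
    exact hπ _
  · intro hW
    exact hij ((π.injective.iterate (s : ℕ)) hW)

end AuxNRB

/-- if `α_1(D) = n` and every vertex of `D` has in-degree exactly `2`, then
every `f ∈ F[D,2]` satisfies `|Im(f^p)| < 2 ^ α_p(D)` for every `p ≥ 1`. -/
theorem not_reaching_the_bound {n : ℕ} (hn : 1 ≤ n) (D : Fin n → Fin n → Prop)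
    (ha : alphaWalks D 1 = n) (hdeg : ∀ v : Fin n, Set.ncard {u : Fin n | D u v} = 2)
    (f : (Fin n → Fin 2) → Fin n → Fin 2) (hf : ExactIG D f) (p : ℕ) (hp : 1 ≤ p) :
    Nat.card (Set.range (f^[p])) < 2 ^ alphaWalks D p := by
  classical
  obtain ⟨π, hπ⟩ := nrb_perm_of_alpha_one D ha
  have halpha : n ≤ alphaWalks D p := nrb_alpha_ge D π hπ p
  have hninj : ¬ Function.Injective f := by
    intro hinj
    have hsurj : Function.Surjective f := Finite.injective_iff_surjective.1 hinj
    have hflip : ∀ (v : Fin n) (x : Fin n → Fin 2), f (fun w => x w + 1) v = f x v := by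
      intro v x
      obtain ⟨u1, u2, hne, hset⟩ := Set.ncard_eq_two.1 (hdeg v)
      have hne' : ¬ (u2 = u1) := fun hh => hne hh.symm
      have hdep : ∀ x y : Fin n → Fin 2,
          (∀ u ∈ ({u1, u2} : Finset (Fin n)), x u = y u) → f x v = f y v := by
        apply nrb_depends_only
        intro u hu hIG
        have hD : D u v := (hf u v).1 hIG
        have hmem : u ∈ ({u1, u2} : Set (Fin n)) := by rw [← hset]; exact hD
        simp only [Finset.mem_insert, Finset.mem_singleton] at hu
        simp only [Set.mem_insert_iff, Set.mem_singleton_iff] at hmem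
        exact hu hmem
      set g : Fin 2 → Fin 2 → Fin 2 :=
        fun a b => f (fun w => if w = u1 then a else if w = u2 then b else 0) v with hgdef
      have hgeq : ∀ y : Fin n → Fin 2, f y v = g (y u1) (y u2) := by
        intro y
        apply hdep
        intro u hu
        simp only [Finset.mem_insert, Finset.mem_singleton] at hu
        rcases hu with rfl | rfl
        · simp
        · simp [hne']
      have hd1 : ∃ b, g 0 b ≠ g 1 b := by
        have hD1 : D u1 v := by
          have h1 : u1 ∈ ({u1, u2} : Set (Fin n)) := Set.mem_insert _ _
          rw [← hset] at h1; exact h1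
        obtain ⟨x1, y1, hagree, hfne⟩ := (hf u1 v).2 hD1
        have hgne : g (x1 u1) (x1 u2) ≠ g (y1 u1) (y1 u2) := by
          rw [← hgeq, ← hgeq]; exact hfne
        have hu2eq : x1 u2 = y1 u2 := hagree u2 (Ne.symm hne)
        have hab : x1 u1 ≠ y1 u1 := by
          intro hh; exact hgne (by rw [hh, hu2eq])
        rw [← hu2eq] at hgne
        have hcases : ∀ s t : Fin 2, s ≠ t → (s = 0 ∧ t = 1) ∨ (s = 1 ∧ t = 0) := by decide
        rcases hcases _ _ hab with ⟨h0, h1⟩ | ⟨h0, h1⟩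
        · rw [h0, h1] at hgne; exact ⟨x1 u2, hgne⟩
        · rw [h0, h1] at hgne; exact ⟨x1 u2, hgne.symm⟩
      have hd2 : ∃ a, g a 0 ≠ g a 1 := by
        have hD2 : D u2 v := by
          have h1 : u2 ∈ ({u1, u2} : Set (Fin n)) := by simp
          rw [← hset] at h1; exact h1
        obtain ⟨x1, y1, hagree, hfne⟩ := (hf u2 v).2 hD2
        have hgne : g (x1 u1) (x1 u2) ≠ g (y1 u1) (y1 u2) := by
          rw [← hgeq, ← hgeq]; exact hfne
        have hu1eq : x1 u1 = y1 u1 := hagree u1 hne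
        have hab : x1 u2 ≠ y1 u2 := by
          intro hh; exact hgne (by rw [hh, hu1eq])
        rw [← hu1eq] at hgne
        have hcases : ∀ s t : Fin 2, s ≠ t → (s = 0 ∧ t = 1) ∨ (s = 1 ∧ t = 0) := by decide
        rcases hcases _ _ hab with ⟨h0, h1⟩ | ⟨h0, h1⟩
        · rw [h0, h1] at hgne; exact ⟨x1 u1, hgne⟩
        · rw [h0, h1] at hgne; exact ⟨x1 u1, hgne.symm⟩
      set m := (Finset.univ.filter fun x : Fin n → Fin 2 => x u1 = 0 ∧ x u2 = 0).card with hm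
      clear_value m
      have hmpos : 0 < m := by
        rw [hm]
        exact Finset.card_pos.2 ⟨fun _ => 0, by simp⟩
      have hc0 : (Finset.univ.filter fun x : Fin n → Fin 2 => x v = 0).card = 2 * m := by
        have htot : (Finset.univ : Finset (Fin n → Fin 2)).card = m + m + (m + m) := by
          rw [nrb_split_card Finset.univ u1,
              nrb_split_card (Finset.univ.filter fun x => x u1 = 0) u2,
              nrb_split_card (Finset.univ.filter fun x => x u1 = 1) u2]
          simp only [Finset.filter_filter]
          rw [nrb_card_shift u1 u2 hne 0 0, nrb_card_shift u1 u2 hne 0 1,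
              nrb_card_shift u1 u2 hne 1 0, nrb_card_shift u1 u2 hne 1 1, ← hm]
        have e4 := nrb_split_card (Finset.univ : Finset (Fin n → Fin 2)) v
        rw [nrb_card_shift1 v 1, htot] at e4
        set c := (Finset.univ.filter fun x : Fin n → Fin 2 => x v = 0).card with hcdef
        clear_value c
        clear hcdef hm
        omega
      have himg : (Finset.univ.filter fun y : Fin n → Fin 2 => y v = 0)
          = Finset.image f (Finset.univ.filter fun x => f x v = 0) := by
        ext y
        simp only [Finset.mem_filter, Finset.mem_univ, true_and, Finset.mem_image]
        constructor
        · intro hy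
          obtain ⟨x, rfl⟩ := hsurj y
          exact ⟨x, hy, rfl⟩
        · rintro ⟨a, ha0, rfl⟩
          exact ha0
      have hfcard : (Finset.univ.filter fun x : Fin n → Fin 2 => f x v = 0).card = 2 * m := by
        rw [← hc0, himg, Finset.card_image_of_injective _ hinj]
      have hterm : ∀ a b : Fin 2,
          (Finset.univ.filter fun x : Fin n → Fin 2 =>
            (f x v = 0 ∧ x u1 = a) ∧ x u2 = b).card = if g a b = 0 then m else 0 := by
        intro a b
        by_cases hgab : g a b = 0
        · rw [if_pos hgab, hm, ← nrb_card_shift u1 u2 hne a b]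
          congr 1
          apply Finset.filter_congr
          intro x _
          constructor
          · rintro ⟨⟨-, h1⟩, h2⟩; exact ⟨h1, h2⟩
          · rintro ⟨h1, h2⟩
            exact ⟨⟨by rw [hgeq, h1, h2]; exact hgab, h1⟩, h2⟩
        · rw [if_neg hgab, Finset.card_eq_zero, Finset.filter_eq_empty_iff]
          rintro x - ⟨⟨h0, h1⟩, h2⟩
          exact hgab (by rw [← h1, ← h2, ← hgeq]; exact h0)
      have h2m : (if g 0 0 = 0 then m else 0) + (if g 0 1 = 0 then m else 0)
            + ((if g 1 0 = 0 then m else 0) + (if g 1 1 = 0 then m else 0)) = 2 * m := by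
        rw [← hterm 0 0, ← hterm 0 1, ← hterm 1 0, ← hterm 1 1, ← hfcard,
            nrb_split_card (Finset.univ.filter fun x => f x v = 0) u1,
            nrb_split_card ((Finset.univ.filter fun x => f x v = 0).filter fun x => x u1 = 0) u2,
            nrb_split_card ((Finset.univ.filter fun x => f x v = 0).filter fun x => x u1 = 1) u2]
        simp only [Finset.filter_filter]
      have hcount : ((if g 0 0 = 0 then 1 else 0) + (if g 0 1 = 0 then 1 else 0)
          + (if g 1 0 = 0 then 1 else 0) + (if g 1 1 = 0 then 1 else 0) : ℕ) = 2 := by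
        clear hm hc0 hfcard
        by_cases h00 : g 0 0 = 0 <;> by_cases h01 : g 0 1 = 0 <;>
          by_cases h10 : g 1 0 = 0 <;> by_cases h11 : g 1 1 = 0 <;>
          simp [h00, h01, h10, h11] at h2m ⊢ <;> omega
      have hgflip := nrb_gclass g hcount hd1 hd2
      calc f (fun w => x w + 1) v = g (x u1 + 1) (x u2 + 1) := hgeq _
        _ = g (x u1) (x u2) := hgflip _ _
        _ = f x v := (hgeq x).symm
    have hXY : f (fun w => (fun _ : Fin n => (0 : Fin 2)) w + 1) = f (fun _ => 0) :=
      funext fun v => hflip v _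
    have heq := hinj hXY
    have hev := congrFun heq ⟨0, hn⟩
    have hcontr : (0 : Fin 2) + 1 = 0 := hev
    exact absurd hcontr (by decide)
  have hnsurj : ¬ Function.Surjective f := fun hs => hninj (Finite.injective_iff_surjective.2 hs)
  obtain ⟨y, hy⟩ : ∃ y, ∀ x, f x ≠ y := by
    by_contra hcon
    push_neg at hcon
    exact hnsurj hcon
  have hyp : y ∉ Set.range (f^[p]) := by
    rintro ⟨x, hx⟩
    obtain ⟨p', rfl⟩ : ∃ p', p = p' + 1 := ⟨p - 1, by omega⟩
    rw [Function.iterate_succ_apply'] at hx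
    exact hy _ hx
  have hss : Set.range (f^[p]) ⊂ Set.univ := by
    rw [Set.ssubset_univ_iff]
    intro huniv
    exact hyp (huniv ▸ Set.mem_univ y)
  calc Nat.card (Set.range (f^[p])) = (Set.range (f^[p])).ncard :=
        Nat.card_coe_set_eq _
    _ < (Set.univ : Set (Fin n → Fin 2)).ncard := Set.ncard_lt_ncard hss Set.finite_univ
    _ = Nat.card (Fin n → Fin 2) := Set.ncard_univ _
    _ = 2 ^ n := by rw [Nat.card_eq_fintype_card]; simp
    _ ≤ 2 ^ alphaWalks D p := Nat.pow_le_pow_right (by norm_num) halpha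
end

section
/- Let D be a digraph on vertex set V = {1,…,n}, let q ≥ 2, let σ be a block-sequential schedule and let f ∈ F[D,q]. Then |Im(f^σ)| ≤ q^{α_1(D)}. -/
open Function

open Classical in
noncomputable def nbhd {n : ℕ} (D : Fin n → Fin n → Prop) (S : Finset (Fin n)) : Finset (Fin n) :=
  Finset.univ.filter (fun v => ∃ u ∈ S, D u v)

lemma mem_nbhd {n : ℕ} {D : Fin n → Fin n → Prop} {S : Finset (Fin n)} {v : Fin n} :
    v ∈ nbhd D S ↔ ∃ u ∈ S, D u v := by
  classical
  simp [nbhd]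

lemma koenig {n : ℕ} (D : Fin n → Fin n → Prop) :
    ∃ (A B : Finset (Fin n)) (k : ℕ) (W : Fin k → Fin 2 → Fin n),
      (∀ u v, D u v → u ∈ A ∨ v ∈ B) ∧ A.card + B.card ≤ k ∧
      (∀ i, IsPWalk D 1 (W i)) ∧ (∀ i j, i ≠ j → ∀ s, W i s ≠ W j s) := by
  classical
  set d : ℕ := Finset.univ.powerset.sup (fun S : Finset (Fin n) => S.card - (nbhd D S).card)
    with hd
  -- Hall setup
  set t : Fin n → Finset (Fin n ⊕ Fin d) :=
    fun u => (nbhd D {u}).image Sum.inl ∪ Finset.univ.image Sum.inr with ht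
  have hall : ∀ s : Finset (Fin n), s.card ≤ (s.biUnion t).card := by
    intro s
    rcases s.eq_empty_or_nonempty with rfl | ⟨u0, hu0⟩
    · simp
    have hsub : ((nbhd D s).image Sum.inl ∪ Finset.univ.image Sum.inr : Finset (Fin n ⊕ Fin d))
        ⊆ s.biUnion t := by
      intro x hx
      rcases Finset.mem_union.mp hx with hx | hx
      · rcases Finset.mem_image.mp hx with ⟨v, hv, rfl⟩
        rcases mem_nbhd.mp hv with ⟨u, hu, huv⟩
        exact Finset.mem_biUnion.mpr ⟨u, hu, Finset.mem_union_left _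
          (Finset.mem_image_of_mem _ (mem_nbhd.mpr ⟨u, Finset.mem_singleton_self u, huv⟩))⟩
      · exact Finset.mem_biUnion.mpr ⟨u0, hu0, Finset.mem_union_right _ hx⟩
    have hcard : ((nbhd D s).image Sum.inl ∪ Finset.univ.image Sum.inr
        : Finset (Fin n ⊕ Fin d)).card = (nbhd D s).card + d := by
      rw [Finset.card_union_of_disjoint, Finset.card_image_of_injective _ Sum.inl_injective,
        Finset.card_image_of_injective _ Sum.inr_injective]
      · simp
      · refine Finset.disjoint_left.mpr ?_
        rintro x hx hx'
        rcases Finset.mem_image.mp hx with ⟨v, _, rfl⟩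
        rcases Finset.mem_image.mp hx' with ⟨j, _, h⟩
        exact Sum.inl_ne_inr h.symm
    have hle : s.card - (nbhd D s).card ≤ d :=
      Finset.le_sup (f := fun S : Finset (Fin n) => S.card - (nbhd D S).card)
        (Finset.mem_powerset.mpr (Finset.subset_univ s))
    calc s.card ≤ (nbhd D s).card + d := by omega
      _ = _ := hcard.symm
      _ ≤ (s.biUnion t).card := Finset.card_le_card hsub
  obtain ⟨F, hFinj, hFmem⟩ := (Finset.all_card_le_biUnion_card_iff_existsInjective' t).mp hall
  -- the matching
  set M : Finset (Fin n) := Finset.univ.filter (fun u => (F u).isLeft) with hM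
  -- k ≥ n - d
  have hkd : n - d ≤ M.card := by
    set M' : Finset (Fin n) := Finset.univ.filter (fun u => ¬ (F u).isLeft) with hM'
    have h1 : M'.card ≤ d := by
      have : M'.image F ⊆ Finset.univ.image Sum.inr := by
        intro x hx
        rcases Finset.mem_image.mp hx with ⟨u, hu, rfl⟩
        have : ¬ (F u).isLeft := (Finset.mem_filter.mp hu).2
        obtain ⟨j, hj⟩ := Sum.isRight_iff.mp (Sum.not_isLeft.mp this)
        rw [hj]
        exact Finset.mem_image_of_mem _ (Finset.mem_univ j)
      have := Finset.card_le_card this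
      rwa [Finset.card_image_of_injective _ hFinj,
        Finset.card_image_of_injective _ Sum.inr_injective, Finset.card_univ,
        Fintype.card_fin] at this
    have h2 : M.card + M'.card = n := by
      rw [hM, hM', Finset.card_filter_add_card_filter_not, Finset.card_univ,
        Fintype.card_fin]
    omega
  -- head map
  have hhead : ∀ u ∈ M, ∃ v, F u = Sum.inl v ∧ D u v := by
    intro u hu
    have hl : (F u).isLeft := (Finset.mem_filter.mp hu).2
    rcases hFu : F u with v | j
    · refine ⟨v, rfl, ?_⟩
      have := hFmem u
      rw [hFu, ht] at this
      rcases Finset.mem_union.mp this with h | h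
      · rcases Finset.mem_image.mp h with ⟨w, hw, hwe⟩
        obtain rfl : w = v := Sum.inl_injective hwe
        rcases mem_nbhd.mp hw with ⟨u', hu', hD⟩
        rwa [Finset.mem_singleton.mp hu'] at hD
      · rcases Finset.mem_image.mp h with ⟨j, _, h⟩
        exact absurd h (Sum.inr_ne_inl)
    · rw [hFu] at hl; simp at hl
  choose hv hveq hvD using hhead
  -- the walks
  set e : Fin M.card → {x // x ∈ M} := fun i => M.equivFin.symm i with he
  set W : Fin M.card → Fin 2 → Fin n :=
    fun i s => if (s : ℕ) = 0 then (e i : Fin n) else hv (e i) (e i).2 with hW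
  -- cover from max-defect set
  obtain ⟨S0, _, hS0⟩ := Finset.exists_mem_eq_sup Finset.univ.powerset ⟨∅, by simp⟩
    (fun S : Finset (Fin n) => S.card - (nbhd D S).card)
  have hnbhd_empty : nbhd D (∅ : Finset (Fin n)) = ∅ := by
    classical
    ext v; simp [mem_nbhd]
  obtain ⟨S, hSd, hSle⟩ : ∃ S : Finset (Fin n), d = S.card - (nbhd D S).card ∧
      (nbhd D S).card ≤ S.card := by
    by_cases h : (nbhd D S0).card ≤ S0.card
    · exact ⟨S0, hS0, h⟩
    · refine ⟨∅, ?_, by simp [hnbhd_empty]⟩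
      rw [← hd] at hS0
      simp [hnbhd_empty]
      omega
  refine ⟨Sᶜ, nbhd D S, M.card, W, ?_, ?_, ?_, ?_⟩
  · intro u v huv
    by_cases hu : u ∈ S
    · exact Or.inr (mem_nbhd.mpr ⟨u, hu, huv⟩)
    · exact Or.inl (Finset.mem_compl.mpr hu)
  · have h1 : Sᶜ.card = n - S.card := by
      rw [Finset.card_compl, Fintype.card_fin]
    have h2 : S.card ≤ n := by
      simpa using Finset.card_le_card (Finset.subset_univ S)
    omega
  · intro i s
    have hs : (s : ℕ) = 0 := by omega
    have h0 : ((s.castSucc : Fin 2) : ℕ) = 0 := by simp [hs]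
    have h1 : ((s.succ : Fin 2) : ℕ) = 1 := by simp [hs]
    simp only [hW, h0, h1]
    simpa using hvD (e i) (e i).2
  · intro i j hij s
    have hne : (e i : Fin n) ≠ (e j : Fin n) := by
      intro h
      exact hij (M.equivFin.symm.injective (Subtype.ext h))
    by_cases hs : (s : ℕ) = 0
    · simpa [hW, (Fin.ext hs : s = 0)] using hne
    · simp only [hW, hs, if_false]
      intro h
      apply hij
      apply M.equivFin.symm.injective
      apply Subtype.ext
      apply hFinj
      rw [hveq (e i) (e i).2, hveq (e j) (e j).2, h]




def runAux {n q : ℕ} (f : (Fin n → Fin q) → Fin n → Fin q) :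
    List (Finset (Fin n)) → (Fin n → Fin q) → (Fin n → Fin q)
  | [], x => x
  | S :: τ, x => runAux f τ (applyBlock f S x)

lemma runAux_append {n q : ℕ} (f : (Fin n → Fin q) → Fin n → Fin q)
    (τ ρ : List (Finset (Fin n))) (x : Fin n → Fin q) :
    runAux f (τ ++ ρ) x = runAux f ρ (runAux f τ x) := by
  induction τ generalizing x with
  | nil => rfl
  | cons S τ ih => simp [runAux, ih]

lemma runAux_notmem {n q : ℕ} (f : (Fin n → Fin q) → Fin n → Fin q)
    {τ : List (Finset (Fin n))} {v : Fin n} (h : ∀ S ∈ τ, v ∉ S) (x : Fin n → Fin q) :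
    runAux f τ x v = x v := by
  induction τ generalizing x with
  | nil => rfl
  | cons S τ ih =>
    rw [runAux, ih (fun S hS => h S (List.mem_cons_of_mem _ hS))]
    simp [applyBlock, h S List.mem_cons_self]

lemma runAux_stable {n q : ℕ} (f : (Fin n → Fin q) → Fin n → Fin q)
    {τ ρ : List (Finset (Fin n))} (hdisj : (τ ++ ρ).Pairwise Disjoint) {v : Fin n}
    (h : ∃ S ∈ τ, v ∈ S) (x : Fin n → Fin q) :
    runAux f (τ ++ ρ) x v = runAux f τ x v := by
  rw [runAux_append]
  apply runAux_notmem
  intro S hS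
  obtain ⟨S0, hS0, hv⟩ := h
  have hd := (List.pairwise_append.mp hdisj).2.2 S0 hS0 S hS
  exact fun hvS => (Finset.disjoint_left.mp hd hv) hvS

lemma f_congr {n q : ℕ} (D : Fin n → Fin n → Prop) (f : (Fin n → Fin q) → Fin n → Fin q)
    (hf : ∀ u v, IG f u v → D u v) (v : Fin n) :
    ∀ z z' : Fin n → Fin q, (∀ u, D u v → z u = z' u) → f z v = f z' v := by
  classical
  suffices H : ∀ (T : Finset (Fin n)) (z z' : Fin n → Fin q),
      (∀ u, D u v → z u = z' u) → (∀ u, z u ≠ z' u → u ∈ T) → f z v = f z' v by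
    intro z z' h1
    exact H Finset.univ z z' h1 (fun u _ => Finset.mem_univ u)
  intro T
  induction T using Finset.induction_on with
  | empty =>
    intro z z' _ h2
    have : z = z' := funext fun u => by_contra fun h => absurd (h2 u h) (by simp)
    rw [this]
  | @insert a T' ha IH =>
    intro z z' h1 h2
    set z'' := Function.update z a (z' a) with hz''
    have hzz'' : f z v = f z'' v := by
      by_cases hav : z a = z' a
      · have : z'' = z := by rw [hz'', ← hav, Function.update_eq_self]
        rw [this]
      · by_contra hne
        exact hav (h1 a (hf a v ⟨z, z'', fun w hw => (Function.update_of_ne hw _ _).symm, hne⟩))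
    rw [hzz'']
    apply IH z'' z'
    · intro u hu
      by_cases h : u = a
      · subst h; simp [hz'']
      · rw [hz'', Function.update_of_ne h]; exact h1 u hu
    · intro u hu
      have hua : u ≠ a := by
        intro h; subst h
        exact hu (by simp [hz''])
      rw [hz'', Function.update_of_ne hua] at hu
      rcases Finset.mem_insert.mp (h2 u hu) with h | h
      · exact absurd h hua
      · exact h

lemma key_lemma {n q : ℕ} (D : Fin n → Fin n → Prop) (σ : List (Finset (Fin n)))
    (hdisj : σ.Pairwise Disjoint) (f : (Fin n → Fin q) → Fin n → Fin q)
    (hf : ∀ u v, IG f u v → D u v) (A B : Finset (Fin n))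
    (hcov : ∀ u v, D u v → u ∈ A ∨ v ∈ B) (x x' : Fin n → Fin q)
    (hA : ∀ u ∈ A, x u = x' u) (hB : ∀ v ∈ B, runAux f σ x v = runAux f σ x' v) :
    ∀ i, ∀ v : Fin n, (∃ S ∈ σ.take i, v ∈ S) → v ∉ B → runAux f σ x v = runAux f σ x' v := by
  intro i
  induction i with
  | zero => rintro v ⟨S, hS, -⟩; simp at hS
  | succ i IH =>
    rintro v ⟨S, hS, hvS⟩ hvB
    rw [List.take_succ] at hS
    rcases List.mem_append.mp hS with hS | hS
    · exact IH v ⟨S, hS, hvS⟩ hvB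
    · have hgi : σ[i]? = some S := by
        cases h : σ[i]? with
        | none => rw [h] at hS; simp at hS
        | some S' => rw [h] at hS; simp at hS; rw [hS]
      have htake : σ.take (i + 1) = σ.take i ++ [S] := by
        rw [List.take_succ, hgi]; rfl
      have hσeq : σ = σ.take (i + 1) ++ σ.drop (i + 1) := (List.take_append_drop _ _).symm
      have hσeq' : σ = σ.take i ++ σ.drop i := (List.take_append_drop _ _).symm
      have hrun : ∀ y : Fin n → Fin q, runAux f σ y v = f (runAux f (σ.take i) y) v := by
        intro y
        conv_lhs => rw [hσeq]
        rw [runAux_stable f (hσeq ▸ hdisj) ⟨S, htake ▸ List.mem_append_right _ (by simp), hvS⟩,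
          htake, runAux_append]
        simp [runAux, applyBlock, hvS]
      rw [hrun x, hrun x']
      apply f_congr D f hf v
      intro u hDuv
      have huA : u ∈ A := (hcov u v hDuv).resolve_right hvB
      by_cases hupd : ∃ S' ∈ σ.take i, u ∈ S'
      · have h1 : runAux f σ x u = runAux f (σ.take i) x u := by
          conv_lhs => rw [hσeq']
          exact runAux_stable f (hσeq' ▸ hdisj) hupd x
        have h2 : runAux f σ x' u = runAux f (σ.take i) x' u := by
          conv_lhs => rw [hσeq']
          exact runAux_stable f (hσeq' ▸ hdisj) hupd x'
        by_cases huB : u ∈ B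
        · rw [← h1, ← h2]; exact hB u huB
        · rw [← h1, ← h2]; exact IH u hupd huB
      · push_neg at hupd
        rw [runAux_notmem f hupd, runAux_notmem f hupd]
        exact hA u huA


lemma applySchedule_eq_runAux {n q : ℕ} (f : (Fin n → Fin q) → Fin n → Fin q)
    (σ : List (Finset (Fin n))) (x : Fin n → Fin q) :
    applySchedule f σ x = runAux f σ x := by
  suffices H : ∀ (σ : List (Finset (Fin n))) (g : (Fin n → Fin q) → Fin n → Fin q)
      (x : Fin n → Fin q),
      σ.foldl (fun g S => applyBlock f S ∘ g) g x = runAux f σ (g x) from H σ id x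
  intro σ
  induction σ with
  | nil => intro g x; rfl
  | cons S τ ih =>
    intro g x
    rw [List.foldl_cons, ih]
    rfl

/-- for `q ≥ 2`, a block-sequential schedule `σ` and `f ∈ F[D,q]`,
`|Im(f^σ)| ≤ q ^ α_1(D)`. -/
theorem max_rank_block_sequential {n q : ℕ} (hn : 1 ≤ n) (hq : 2 ≤ q)
    (D : Fin n → Fin n → Prop) (σ : List (Finset (Fin n))) (hσ : BlockSequential σ)
    (f : (Fin n → Fin q) → Fin n → Fin q) (hf : ExactIG D f) :
    Nat.card (Set.range (applySchedule f σ)) ≤ q ^ alphaWalks D 1 := by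
  classical
  obtain ⟨A, B, k, W, hcov, hABk, hWwalk, hWind⟩ := koenig D
  have hkα : k ≤ alphaWalks D 1 := by
    have hbdd : BddAbove {k : ℕ | ∃ W : Fin k → Fin (1 + 1) → Fin n,
        (∀ i, IsPWalk D 1 (W i)) ∧ ∀ i j : Fin k, i ≠ j → ∀ s, W i s ≠ W j s} := by
      refine ⟨n, fun m hm => ?_⟩
      obtain ⟨W', _, hind'⟩ := hm
      have hinj : Function.Injective (fun i : Fin m => W' i 0) := by
        intro i j h
        by_contra hne
        exact hind' i j hne 0 h
      calc m = Fintype.card (Fin m) := (Fintype.card_fin m).symm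
        _ ≤ Fintype.card (Fin n) := Fintype.card_le_of_injective _ hinj
        _ = n := Fintype.card_fin n
    exact le_csSup hbdd ⟨W, hWwalk, hWind⟩
  have hfD : ∀ u v, IG f u v → D u v := fun u v h => (hf u v).mp h
  obtain ⟨hdisj, hcomp⟩ := hσ
  set g := applySchedule f σ with hgdef
  have hg : ∀ x, g x = runAux f σ x := fun x => applySchedule_eq_runAux f σ x
  have hdet : ∀ x x' : Fin n → Fin q, (∀ u ∈ A, x u = x' u) →
      (∀ v ∈ B, g x v = g x' v) → g x = g x' := by
    intro x x' hA hB
    rw [hg, hg]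
    funext v
    by_cases hvB : v ∈ B
    · rw [← hg, ← hg]
      exact hB v hvB
    · obtain ⟨S, hS, hvS⟩ := hcomp v
      refine key_lemma D σ hdisj f hfD A B hcov x x' hA
        (fun w hw => by rw [← hg, ← hg]; exact hB w hw) σ.length v ⟨S, ?_, hvS⟩ hvB
      rwa [List.take_length]
  set Φ : Set.range g → (({a // a ∈ A} → Fin q) × ({b // b ∈ B} → Fin q)) :=
    fun y => (fun a => y.2.choose a.1, fun b => y.1 b.1) with hΦdef
  have hΦ : Function.Injective Φ := by
    rintro ⟨y, hy⟩ ⟨y', hy'⟩ h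
    simp only [hΦdef, Prod.mk.injEq] at h
    have h1 := congrFun h.1
    have h2 := congrFun h.2
    have hx : g hy.choose = y := hy.choose_spec
    have hx' : g hy'.choose = y' := hy'.choose_spec
    have : g hy.choose = g hy'.choose := by
      refine hdet _ _ (fun u hu => h1 ⟨u, hu⟩) (fun v hv => ?_)
      rw [hx, hx']
      exact h2 ⟨v, hv⟩
    apply Subtype.ext
    show y = y'
    rw [← hx, ← hx', this]
  have hcard := Nat.card_le_card_of_injective Φ hΦ
  have htarget : Nat.card (({a // a ∈ A} → Fin q) × ({b // b ∈ B} → Fin q))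
      = q ^ A.card * q ^ B.card := by
    simp [Nat.card_eq_fintype_card, Fintype.card_fun]
  calc Nat.card (Set.range (applySchedule f σ)) ≤ q ^ A.card * q ^ B.card := by
        rw [← htarget]; exact hcard
    _ = q ^ (A.card + B.card) := (pow_add q _ _).symm
    _ ≤ q ^ alphaWalks D 1 :=
        Nat.pow_le_pow_right (by omega) (le_trans hABk hkα)
end

section
/- Let D be a digraph on vertex set V = {1,…,n} and let q ≥ 3. The following are equivalent: (1) F[D,q] contains a permutation of [q]^n; (2) there exist f ∈ F[D,q] and a block-sequential schedule σ such that f^σ is a permutation of [q]^n; (3) all the vertices of D can be covered by pairwise vertex-disjoint cycles of D. -/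
open Function

theorem fds_indep {n q : ℕ} {D : Fin n → Fin n → Prop} {f : (Fin n → Fin q) → Fin n → Fin q}
    (hf : ∀ u v, IG f u v → D u v) (v : Fin n) :
    ∀ x y : Fin n → Fin q, (∀ u, D u v → x u = y u) → f x v = f y v := by
  have key : ∀ (k : ℕ) (x y : Fin n → Fin q),
      (Finset.univ.filter (fun u => x u ≠ y u)).card ≤ k →
      (∀ u, D u v → x u = y u) → f x v = f y v := by
    intro k
    induction k with
    | zero =>
      intro x y hc h
      have hxy : x = y := by
        funext u
        by_contra hne
        have hu : u ∈ Finset.univ.filter (fun u => x u ≠ y u) := by simp [hne]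
        have := Finset.card_pos.mpr ⟨u, hu⟩
        omega
      rw [hxy]
    | succ k ih =>
      intro x y hc h
      by_cases hxy : x = y
      · rw [hxy]
      · obtain ⟨u₀, hu₀⟩ : ∃ u₀, x u₀ ≠ y u₀ := by
          by_contra h'; push_neg at h'; exact hxy (funext h')
        have hD : ¬ D u₀ v := fun hd => hu₀ (h u₀ hd)
        set y' := Function.update x u₀ (y u₀) with hy'
        have h1 : f x v = f y' v := by
          by_contra hne
          exact hD (hf u₀ v ⟨x, y', fun w hw => (Function.update_of_ne hw _ _).symm, hne⟩)
        have h2 : f y' v = f y v := by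
          apply ih
          · have hmem : u₀ ∈ Finset.univ.filter (fun u => x u ≠ y u) := by simp [hu₀]
            have hsub : (Finset.univ.filter (fun u => y' u ≠ y u)) ⊆
                (Finset.univ.filter (fun u => x u ≠ y u)).erase u₀ := by
              intro u hu
              simp only [Finset.mem_filter, Finset.mem_univ, true_and] at hu
              rcases eq_or_ne u u₀ with rfl | hne
              · exact absurd (by simp [hy']) hu
              · simp only [hy', Function.update_of_ne hne] at hu
                exact Finset.mem_erase.mpr ⟨hne, by simp [hu]⟩
            have := Finset.card_le_card hsub
            rw [Finset.card_erase_of_mem hmem] at this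
            omega
          · intro u hd
            rcases eq_or_ne u u₀ with rfl | hne
            · simp [hy']
            · rw [hy', Function.update_of_ne hne]; exact h u hd
        rw [h1, h2]
  intro x y h
  exact key _ x y le_rfl h

theorem applySchedule_cons {n q : ℕ} (f : (Fin n → Fin q) → Fin n → Fin q)
    (S : Finset (Fin n)) (σ : List (Finset (Fin n))) :
    applySchedule f (S :: σ) = applySchedule f σ ∘ applyBlock f S := by
  have aux : ∀ (σ : List (Finset (Fin n))) (g : (Fin n → Fin q) → Fin n → Fin q),
      σ.foldl (fun g S => applyBlock f S ∘ g) g = applySchedule f σ ∘ g := by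
    intro σ
    induction σ with
    | nil => intro g; rfl
    | cons T τ ih =>
      intro g
      show τ.foldl _ (applyBlock f T ∘ g) = _
      rw [ih (applyBlock f T ∘ g)]
      show _ = (τ.foldl (fun g S => applyBlock f S ∘ g) (applyBlock f T ∘ id)) ∘ g
      rw [ih (applyBlock f T ∘ id)]
      rfl
  show (σ.foldl (fun g S => applyBlock f S ∘ g) (applyBlock f S ∘ id)) = _
  rw [aux σ (applyBlock f S ∘ id)]
  rfl

theorem blocks_bijective {n q : ℕ} (f : (Fin n → Fin q) → Fin n → Fin q)
    (σ : List (Finset (Fin n))) (h : Function.Bijective (applySchedule f σ)) :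
    ∀ S ∈ σ, Function.Bijective (applyBlock f S) := by
  induction σ with
  | nil => intro S hS; simp at hS
  | cons T τ ih =>
    rw [applySchedule_cons] at h
    have hT : Function.Bijective (applyBlock f T) :=
      Finite.injective_iff_bijective.mp fun a b hab => h.1 (by simp [Function.comp, hab])
    have hτ : Function.Bijective (applySchedule f τ) := by
      have heq : applySchedule f τ = (applySchedule f τ ∘ applyBlock f T) ∘
          (Equiv.ofBijective _ hT).symm := by
        funext x
        simp [Function.comp, Equiv.ofBijective_apply_symm_apply]
      rw [heq]
      exact h.comp (Equiv.ofBijective _ hT).symm.bijective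
    intro S hS
    rcases List.mem_cons.mp hS with rfl | hS
    · exact hT
    · exact ih hτ S hS

theorem construct_perm {n q : ℕ} (hq : 3 ≤ q) (D : Fin n → Fin n → Prop)
    (e : Equiv.Perm (Fin n)) (he : ∀ v, D (e v) v) :
    ∃ f : (Fin n → Fin q) → Fin n → Fin q, ExactIG D f ∧ Function.Bijective f := by
  classical
  set z : Fin q := ⟨0, by omega⟩ with hz
  set o1 : Fin q := ⟨1, by omega⟩ with ho1
  set o2 : Fin q := ⟨2, by omega⟩ with ho2
  have hz1 : z ≠ o1 := Fin.ne_of_val_ne (by simp [hz, ho1])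
  have hz2 : z ≠ o2 := Fin.ne_of_val_ne (by simp [hz, ho2])
  have h12 : o1 ≠ o2 := Fin.ne_of_val_ne (by simp [ho1, ho2])
  set sw : Equiv.Perm (Fin q) := Equiv.swap o1 o2 with hsw
  have hswz : sw z = z := Equiv.swap_apply_of_ne_of_ne hz1 hz2
  have hswzero : ∀ t : Fin q, sw t = z ↔ t = z := by
    intro t
    constructor
    · intro h; have := sw.injective (h.trans hswz.symm); exact this
    · intro h; rw [h]; exact hswz
  set cnt : Fin n → (Fin n → Fin q) → ℕ := fun v x =>
    (Finset.univ.filter (fun u => D u v ∧ u ≠ e v ∧ x u = z)).card with hcnt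
  set f : (Fin n → Fin q) → Fin n → Fin q := fun x v =>
    if Odd (cnt v x) then sw (x (e v)) else x (e v) with hfdef
  have fzero : ∀ (x : Fin n → Fin q) (v : Fin n), f x v = z ↔ x (e v) = z := by
    intro x v
    by_cases h : Odd (cnt v x) <;> simp only [hfdef, if_pos, if_neg, h, if_true, if_false,
      hswzero, ite_true, ite_false]
  -- inverse
  set g : (Fin n → Fin q) → Fin n → Fin q := fun y u =>
    if Odd ((Finset.univ.filter
        (fun u' => D u' (e.symm u) ∧ u' ≠ e (e.symm u) ∧ y (e.symm u') = z)).card)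
    then sw (y (e.symm u)) else y (e.symm u) with hgdef
  have hgf : ∀ x, g (f x) = x := by
    intro x
    funext u
    have hcnteq : (Finset.univ.filter
        (fun u' => D u' (e.symm u) ∧ u' ≠ e (e.symm u) ∧ f x (e.symm u') = z)).card
        = cnt (e.symm u) x := by
      rw [hcnt]
      congr 1
      apply Finset.filter_congr
      intro u' _
      simp only [fzero x (e.symm u'), Equiv.apply_symm_apply]
    rw [hgdef]
    simp only [hcnteq]
    by_cases h : Odd (cnt (e.symm u) x)
    · simp only [if_pos h, hfdef, if_pos h, Equiv.apply_symm_apply, hsw,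
        Equiv.swap_apply_self]
    · simp only [if_neg h, hfdef, if_neg h, Equiv.apply_symm_apply]
  have hinj : Function.Injective f := Function.LeftInverse.injective hgf
  have hbij : Function.Bijective f := Finite.injective_iff_bijective.mp hinj
  refine ⟨f, ?_, hbij⟩
  intro u v
  constructor
  · rintro ⟨x, y, hxy, hne⟩
    by_contra hD
    apply hne
    have huev : u ≠ e v := fun h => hD (h ▸ he v)
    have hxyev : x (e v) = y (e v) := hxy (e v) (Ne.symm huev)
    have hcnteq : cnt v x = cnt v y := by
      show (Finset.univ.filter (fun u' => D u' v ∧ u' ≠ e v ∧ x u' = z)).card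
          = (Finset.univ.filter (fun u' => D u' v ∧ u' ≠ e v ∧ y u' = z)).card
      congr 1
      apply Finset.filter_congr
      intro u' _
      have : ∀ (h1 : D u' v), x u' = y u' := fun h1 =>
        hxy u' (fun h => hD (h ▸ h1))
      constructor
      · rintro ⟨h1, h2, h3⟩; exact ⟨h1, h2, (this h1) ▸ h3⟩
      · rintro ⟨h1, h2, h3⟩; exact ⟨h1, h2, (this h1).symm ▸ h3⟩
    rw [hfdef]
    simp only [hcnteq, hxyev]
  · intro hD
    by_cases hu : u = e v
    · subst hu
      set x : Fin n → Fin q := fun _ => o1 with hx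
      set y : Fin n → Fin q := Function.update x (e v) o2 with hy
      refine ⟨x, y, fun w hw => (Function.update_of_ne hw _ _).symm, ?_⟩
      have hcx : cnt v x = 0 := by
        show (Finset.univ.filter (fun u' => D u' v ∧ u' ≠ e v ∧ x u' = z)).card = 0
        rw [Finset.card_eq_zero, Finset.filter_eq_empty_iff]
        rintro u' - ⟨-, -, h3⟩
        simp only [hx] at h3
        exact hz1 h3.symm
      have hcy : cnt v y = 0 := by
        show (Finset.univ.filter (fun u' => D u' v ∧ u' ≠ e v ∧ y u' = z)).card = 0
        rw [Finset.card_eq_zero, Finset.filter_eq_empty_iff]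
        rintro u' - ⟨-, h2, h3⟩
        rw [hy, Function.update_of_ne h2] at h3
        simp only [hx] at h3
        exact hz1 h3.symm
      have hfx : f x v = o1 := by
        simp only [hfdef, hcx]
        rw [if_neg (by norm_num : ¬ Odd 0)]
      have hfy : f y v = o2 := by
        simp only [hfdef, hcy]
        rw [if_neg (by norm_num : ¬ Odd 0), hy, Function.update_self]
      rw [hfx, hfy]
      exact h12
    · set x : Fin n → Fin q := fun _ => o1 with hx
      set y : Fin n → Fin q := Function.update x u z with hy
      refine ⟨x, y, fun w hw => (Function.update_of_ne hw _ _).symm, ?_⟩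
      have hcx : cnt v x = 0 := by
        show (Finset.univ.filter (fun u' => D u' v ∧ u' ≠ e v ∧ x u' = z)).card = 0
        rw [Finset.card_eq_zero, Finset.filter_eq_empty_iff]
        rintro u' - ⟨-, -, h3⟩
        simp only [hx] at h3
        exact hz1 h3.symm
      have hcy : cnt v y = 1 := by
        show (Finset.univ.filter (fun u' => D u' v ∧ u' ≠ e v ∧ y u' = z)).card = 1
        have hset : (Finset.univ.filter (fun u' => D u' v ∧ u' ≠ e v ∧ y u' = z)) = {u} := by
          ext u'
          simp only [Finset.mem_filter, Finset.mem_univ, true_and, Finset.mem_singleton]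
          constructor
          · rintro ⟨-, -, h3⟩
            by_contra hne
            rw [hy, Function.update_of_ne hne] at h3
            simp only [hx] at h3
            exact hz1 h3.symm
          · rintro rfl
            exact ⟨hD, hu, by rw [hy, Function.update_self]⟩
        rw [hset, Finset.card_singleton]
      have hyev : y (e v) = o1 := by
        rw [hy, Function.update_of_ne (fun h => hu h.symm)]
      have hfx : f x v = o1 := by
        simp only [hfdef, hcx]
        rw [if_neg (by norm_num : ¬ Odd 0)]
      have hfy : f y v = o2 := by
        simp only [hfdef, hcy]
        rw [if_pos (by norm_num : Odd 1), hyev, hsw, Equiv.swap_apply_left]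
      rw [hfx, hfy]
      exact fun h => h12 h

theorem cover_to_perm {n : ℕ} {D : Fin n → Fin n → Prop} (h : CoveredByDisjointCycles D) :
    ∃ e : Equiv.Perm (Fin n), ∀ v, D (e v) v := by
  classical
  obtain ⟨Cs, hcycs, hdisj, hcover⟩ := h
  have hsym : Symmetric (fun a b : List (Fin n) => ∀ v ∈ a, v ∉ b) := by
    intro a b hab v hv hv'
    exact hab v hv' hv
  have huniq : ∀ c ∈ Cs, ∀ c' ∈ Cs, ∀ w : Fin n, w ∈ c → w ∈ c' → c = c' := by
    intro c hc c' hc' w hw hw'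
    by_contra hne
    exact (haveI : Std.Symm (fun a b : List (Fin n) => ∀ v ∈ a, v ∉ b) := ⟨fun a b h => hsym h⟩; hdisj.forall) hc hc' hne w hw hw'
  have hex : ∀ v : Fin n, ∃ c, c ∈ Cs ∧ ∃ j : Fin c.length, v = c.get j := by
    intro v
    obtain ⟨c, hc, hv⟩ := hcover v
    obtain ⟨j, hj⟩ := List.mem_iff_get.mp hv
    exact ⟨c, hc, j, hj.symm⟩
  choose cyc hcycmem idx hidx using hex
  -- π v := predecessor of v in its cycle
  have hlenpos : ∀ v, 0 < (cyc v).length := fun v => (idx v).pos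
  set π : Fin n → Fin n := fun v =>
    (cyc v).get ⟨((idx v : ℕ) + (cyc v).length - 1) % (cyc v).length,
      Nat.mod_lt _ (hlenpos v)⟩ with hπ
  have harith : ∀ (i len : ℕ), i < len →
      ((i + len - 1) % len + 1) % len = i := by
    intro i len hi
    have h1 : i + len - 1 + 1 = i + len := by omega
    rw [Nat.mod_add_mod, h1, Nat.add_mod_right, Nat.mod_eq_of_lt hi]
  have hsucc : ∀ v : Fin n, ∃ c, c ∈ Cs ∧ ∃ j : Fin c.length, c.get j = π v ∧
      v = c.get ⟨((j : ℕ) + 1) % c.length, Nat.mod_lt _ j.pos⟩ := by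
    intro v
    refine ⟨cyc v, hcycmem v, ⟨((idx v : ℕ) + (cyc v).length - 1) % (cyc v).length,
      Nat.mod_lt _ (hlenpos v)⟩, rfl, ?_⟩
    have he : (⟨(((idx v : ℕ) + (cyc v).length - 1) % (cyc v).length + 1) % (cyc v).length,
        Nat.mod_lt _ (hlenpos v)⟩ : Fin (cyc v).length) = idx v :=
      Fin.ext (harith _ _ (idx v).isLt)
    rw [show (⟨(((idx v : ℕ) + (cyc v).length - 1) % (cyc v).length + 1) % (cyc v).length,
        _⟩ : Fin (cyc v).length) = idx v from he]
    exact hidx v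
  have hπD : ∀ v, D (π v) v := by
    intro v
    obtain ⟨c, hc, j, hj1, hj2⟩ := hsucc v
    have hthis := (hcycs c hc).2.2 j
    rw [hj1] at hthis
    rw [← hj2] at hthis
    exact hthis
  have hπinj : Function.Injective π := by
    intro v v' hvv'
    obtain ⟨c, hc, j, hj1, hj2⟩ := hsucc v
    obtain ⟨c', hc', j', hj1', hj2'⟩ := hsucc v'
    have hmem1 : π v ∈ c := hj1 ▸ List.get_mem c j
    have hmem2 : π v ∈ c' := by rw [hvv']; exact hj1' ▸ List.get_mem c' j'
    have hcc : c = c' := huniq c hc c' hc' (π v) hmem1 hmem2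
    subst hcc
    have hjj : j = j' := by
      have hnd := (hcycs c hc).2.1
      exact List.nodup_iff_injective_get.mp hnd (hj1.trans (hvv' ▸ hj1'.symm))
    rw [hj2, hj2']
    congr 1
    rw [hjj]
  exact ⟨Equiv.ofBijective π (Finite.injective_iff_bijective.mp hπinj), fun v => by
    simpa using hπD v⟩

theorem perm_to_cover {n : ℕ} {D : Fin n → Fin n → Prop} (e : Equiv.Perm (Fin n))
    (he : ∀ v, D (e v) v) : CoveredByDisjointCycles D := by
  classical
  set g : Fin n → Fin n := fun v => e.symm v with hg
  have hginj : Function.Injective g := fun a b hab => e.symm.injective hab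
  have hgiter : ∀ (k : ℕ) (v : Fin n), (⇑e.symm)^[k] v = ((e.symm : Equiv.Perm (Fin n)) ^ k) v := by
    intro k v
    rw [← Equiv.Perm.iterate_eq_pow]
  have hper : ∀ v : Fin n, v ∈ Function.periodicPts g := by
    intro v
    refine ⟨orderOf (e.symm : Equiv.Perm (Fin n)), orderOf_pos _, ?_⟩
    show g^[orderOf (e.symm : Equiv.Perm (Fin n))] v = v
    have : g^[orderOf (e.symm : Equiv.Perm (Fin n))] v =
        ((e.symm : Equiv.Perm (Fin n)) ^ orderOf (e.symm : Equiv.Perm (Fin n))) v := hgiter _ v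
    rw [this, pow_orderOf_eq_one]
    rfl
  set m : Fin n → ℕ := fun v => Function.minimalPeriod g v with hm
  have hmpos : ∀ v, 0 < m v := fun v => Function.minimalPeriod_pos_of_mem_periodicPts (hper v)
  set cyc : Fin n → List (Fin n) := fun v => (List.range (m v)).map (fun k => g^[k] v) with hcyc
  have hlen : ∀ v, (cyc v).length = m v := by
    intro v; simp [hcyc]
  have getcyc : ∀ (v : Fin n) (j : ℕ) (hj : j < (cyc v).length),
      (cyc v).get ⟨j, hj⟩ = g^[j] v := by
    intro v j hj
    simp [hcyc]
  have memcyc : ∀ (v w : Fin n), w ∈ cyc v ↔ ∃ k, k < m v ∧ g^[k] v = w := by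
    intro v w
    simp only [hcyc, List.mem_map, List.mem_range]
  have hcyccyc : ∀ v : Fin n, IsCycleList D (cyc v) := by
    intro v
    refine ⟨?_, ?_, ?_⟩
    · intro h
      have h0 := hlen v
      rw [h] at h0
      simp only [List.length_nil] at h0
      have := hmpos v
      omega
    · apply List.Nodup.map_on
      · intro a ha b hb hab
        exact Function.iterate_injOn_Iio_minimalPeriod
          (Set.mem_Iio.mpr (List.mem_range.mp ha)) (Set.mem_Iio.mpr (List.mem_range.mp hb)) hab
      · exact List.nodup_range
    · intro i
      have hi := i.isLt
      rw [getcyc v i.val i.isLt, getcyc v _ (Nat.mod_lt _ i.pos)]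
      have hkey : g^[((i : ℕ) + 1) % (cyc v).length] v = g (g^[(i : ℕ)] v) := by
        have h1 : ((i : ℕ) + 1) % (cyc v).length = ((i : ℕ) + 1) % m v :=
          congrArg (fun t => ((i : ℕ) + 1) % t) (hlen v)
        rw [h1, Function.iterate_mod_minimalPeriod_eq]
        rw [Function.iterate_succ_apply']
      rw [hkey]
      have : e (g (g^[(i : ℕ)] v)) = g^[(i : ℕ)] v := by
        show e (e.symm _) = _
        exact e.apply_symm_apply _
      have hD := he (g (g^[(i : ℕ)] v))
      rw [this] at hD
      exact hD
  -- main induction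
  have main : ∀ (k : ℕ) (R : Finset (Fin n)), R.card ≤ k → (∀ w ∈ R, g w ∈ R) →
      ∃ Cs : List (List (Fin n)), (∀ c ∈ Cs, IsCycleList D c) ∧
        Cs.Pairwise (fun a b => ∀ v ∈ a, v ∉ b) ∧ (∀ w ∈ R, ∃ c ∈ Cs, w ∈ c) ∧
        (∀ c ∈ Cs, ∀ w ∈ c, w ∈ R) := by
    intro k
    induction k with
    | zero =>
      intro R hcard _
      have : R = ∅ := Finset.card_eq_zero.mp (Nat.le_zero.mp hcard)
      subst this
      exact ⟨[], by simp, by simp, by simp, by simp⟩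
    | succ k ih =>
      intro R hcard hclosed
      rcases R.eq_empty_or_nonempty with rfl | ⟨v, hv⟩
      · exact ⟨[], by simp, by simp, by simp, by simp⟩
      · have horbR : ∀ j : ℕ, g^[j] v ∈ R := by
          intro j
          induction j with
          | zero => exact hv
          | succ j ihj => rw [Function.iterate_succ_apply']; exact hclosed _ ihj
        set O : Finset (Fin n) := (Finset.range (m v)).image (fun k => g^[k] v) with hO
        have hOmem : ∀ w, w ∈ O ↔ w ∈ cyc v := by
          intro w
          rw [memcyc]
          simp [hO]
        have hOclosed : ∀ w, g w ∈ O → w ∈ O := by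
          intro w hw
          rw [hOmem] at hw ⊢
          rw [memcyc] at hw ⊢
          obtain ⟨k, hk, hkw⟩ := hw
          rcases Nat.eq_zero_or_pos k with rfl | hkpos
          · -- g w = v; then w = g^[m v - 1] v
            refine ⟨m v - 1, by omega, ?_⟩
            apply hginj
            rw [← Function.iterate_succ_apply' g (m v - 1) v]
            have h1 : (m v - 1).succ = m v := by omega
            rw [h1]
            have h2 : g^[m v] v = v := Function.iterate_minimalPeriod
            rw [h2]
            exact hkw
          · refine ⟨k - 1, by omega, ?_⟩
            apply hginj
            rw [← Function.iterate_succ_apply' g (k - 1) v]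
            have h1 : (k - 1).succ = k := by omega
            rw [h1]
            exact hkw
        have hvO : v ∈ O := by
          rw [hOmem, memcyc]
          exact ⟨0, hmpos v, rfl⟩
        set R' : Finset (Fin n) := R \ O with hR'
        have hR'closed : ∀ w ∈ R', g w ∈ R' := by
          intro w hw
          rw [hR', Finset.mem_sdiff] at hw ⊢
          exact ⟨hclosed w hw.1, fun h => hw.2 (hOclosed w h)⟩
        have hR'card : R'.card ≤ k := by
          have hss : R' ⊂ R := by
            rw [hR']
            refine Finset.sdiff_ssubset ?_ ?_
            · intro u hu
              rw [hOmem, memcyc] at hu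
              obtain ⟨j, _, rfl⟩ := hu
              exact horbR j
            · exact ⟨v, hvO⟩
          have := Finset.card_lt_card hss
          omega
        obtain ⟨Cs', h1, h2, h3, h4⟩ := ih R' hR'card hR'closed
        refine ⟨cyc v :: Cs', ?_, ?_, ?_, ?_⟩
        · intro c hc
          rcases List.mem_cons.mp hc with rfl | hc
          · exact hcyccyc v
          · exact h1 c hc
        · rw [List.pairwise_cons]
          refine ⟨?_, h2⟩
          intro c' hc' w hw hw'
          have hwO : w ∈ O := (hOmem w).mpr hw
          have : w ∈ R' := h4 c' hc' w hw'
          rw [hR', Finset.mem_sdiff] at this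
          exact this.2 hwO
        · intro w hw
          by_cases hwO : w ∈ O
          · exact ⟨cyc v, List.mem_cons_self, (hOmem w).mp hwO⟩
          · obtain ⟨c, hc, hwc⟩ := h3 w (by rw [hR', Finset.mem_sdiff]; exact ⟨hw, hwO⟩)
            exact ⟨c, List.mem_cons_of_mem _ hc, hwc⟩
        · intro c hc w hw
          rcases List.mem_cons.mp hc with rfl | hc
          · have : w ∈ O := (hOmem w).mpr hw
            rw [hOmem, memcyc] at this
            obtain ⟨j, _, rfl⟩ := this
            exact horbR j
          · have := h4 c hc w hw
            rw [hR', Finset.mem_sdiff] at this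
            exact this.1
  obtain ⟨Cs, h1, h2, h3, _⟩ := main (Finset.univ.card) Finset.univ le_rfl (by simp)
  exact ⟨Cs, h1, h2, fun v => h3 v (Finset.mem_univ v)⟩

theorem block_matching {n q : ℕ} (hq : 3 ≤ q) {D : Fin n → Fin n → Prop}
    {f : (Fin n → Fin q) → Fin n → Fin q} (hIG : ∀ u v, IG f u v ↔ D u v)
    (S : Finset (Fin n)) (hbij : Function.Bijective (applyBlock f S)) :
    ∃ mS : {v // v ∈ S} → Fin n, Function.Injective mS ∧
      ∀ v : {v // v ∈ S}, mS v ∈ S ∧ D (mS v) (v : Fin n) := by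
  classical
  set z : Fin q := ⟨0, by omega⟩ with hz
  set t : {v // v ∈ S} → Finset (Fin n) := fun v => S.filter (fun u => D u v.val) with ht
  have hall : ∀ s : Finset {v // v ∈ S}, s.card ≤ (s.biUnion t).card := by
    intro s
    set N : Finset (Fin n) := s.biUnion t with hN
    have hNS : N ⊆ S := by
      intro u hu
      rw [hN] at hu
      obtain ⟨v, _, hv⟩ := Finset.mem_biUnion.mp hu
      exact (Finset.mem_filter.mp hv).1
    set T : Finset (Fin n) := s.image (fun v => v.val) with hT
    have hTS : T ⊆ S := by
      intro u hu
      rw [hT] at hu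
      obtain ⟨v, _, rfl⟩ := Finset.mem_image.mp hu
      exact v.prop
    have hTcard : T.card = s.card := Finset.card_image_of_injective s Subtype.coe_injective
    set ext : ({u // u ∈ N} → Fin q) → (Fin n → Fin q) :=
      fun w u => if h : u ∈ N then w ⟨u, h⟩ else z with hext
    set Ψ : ({u // u ∈ N} → Fin q) → ({v // v ∈ T} → Fin q) :=
      fun w v => f (ext w) v.val with hΨ
    have hsurj : Function.Surjective Ψ := by
      intro tval
      set y : Fin n → Fin q := fun u => if h : u ∈ T then tval ⟨u, h⟩ else z with hy
      obtain ⟨x, hx⟩ := hbij.2 y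
      have hxout : ∀ u, u ∉ S → x u = z := by
        intro u hu
        have h1 : applyBlock f S x u = x u := by simp [applyBlock, hu]
        rw [hx] at h1
        rw [← h1]
        show (if h : u ∈ T then tval ⟨u, h⟩ else z) = z
        rw [dif_neg (fun h => hu (hTS h))]
      refine ⟨fun u => x u.val, ?_⟩
      funext v
      show f (ext (fun u => x u.val)) v.val = tval v
      have hfx : f x v.val = tval v := by
        have h1 : applyBlock f S x v.val = y v.val := by rw [hx]
        have h2 : applyBlock f S x v.val = f x v.val := by
          simp [applyBlock, hTS v.prop]
        rw [h2] at h1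
        rw [h1]
        show (if h : v.val ∈ T then tval ⟨v.val, h⟩ else z) = tval v
        rw [dif_pos v.prop]
      rw [← hfx]
      apply fds_indep (fun u v => (hIG u v).mp) v.val
      intro u hDu
      by_cases hu : u ∈ N
      · rw [hext]
        simp only [dif_pos hu]
      · have huS : u ∉ S := by
          intro huS
          apply hu
          obtain ⟨v₀, hv₀s, hv₀⟩ := Finset.mem_image.mp v.prop
          rw [hN]
          apply Finset.mem_biUnion.mpr
          refine ⟨v₀, hv₀s, ?_⟩
          rw [ht]
          exact Finset.mem_filter.mpr ⟨huS, by rw [hv₀]; exact hDu⟩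
        rw [hext]
        simp only [dif_neg hu]
        exact (hxout u huS).symm
    have hcard : Fintype.card ({v // v ∈ T} → Fin q) ≤ Fintype.card ({u // u ∈ N} → Fin q) :=
      Fintype.card_le_of_surjective Ψ hsurj
    rw [Fintype.card_fun, Fintype.card_fun, Fintype.card_coe, Fintype.card_coe,
      Fintype.card_fin] at hcard
    have hle := (Nat.pow_le_pow_iff_right (show 1 < q by omega)).mp hcard
    rw [hTcard] at hle
    exact hle
  obtain ⟨mS, hinj, hmem⟩ := (Finset.all_card_le_biUnion_card_iff_existsInjective' t).mp hall
  refine ⟨mS, hinj, fun v => ?_⟩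
  have h := hmem v
  rw [ht] at h
  exact ⟨(Finset.mem_filter.mp h).1, (Finset.mem_filter.mp h).2⟩

theorem schedule_to_perm {n q : ℕ} (hq : 3 ≤ q) {D : Fin n → Fin n → Prop}
    {f : (Fin n → Fin q) → Fin n → Fin q} (hIG : ExactIG D f)
    {σ : List (Finset (Fin n))} (hbs : BlockSequential σ)
    (hbij : Function.Bijective (applySchedule f σ)) :
    ∃ e : Equiv.Perm (Fin n), ∀ v, D (e v) v := by
  classical
  have hblocks := blocks_bijective f σ hbij
  have hms : ∀ (S : Finset (Fin n)), S ∈ σ →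
      ∃ mS : {v // v ∈ S} → Fin n, Function.Injective mS ∧
        ∀ v : {v // v ∈ S}, mS v ∈ S ∧ D (mS v) (v : Fin n) :=
    fun S hS => block_matching hq hIG S (hblocks S hS)
  choose M hMinj hMmem using hms
  choose blk hblkmem hvblk using hbs.2
  set π : Fin n → Fin n := fun v => M (blk v) (hblkmem v) ⟨v, hvblk v⟩ with hπ
  have hπD : ∀ v, D (π v) v := fun v => (hMmem _ (hblkmem v) ⟨v, hvblk v⟩).2
  have hπinj : Function.Injective π := by
    intro v v' h
    have h1 : π v ∈ blk v := (hMmem _ (hblkmem v) ⟨v, hvblk v⟩).1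
    have h2 : π v' ∈ blk v' := (hMmem _ (hblkmem v') ⟨v', hvblk v'⟩).1
    have hbb : blk v = blk v' := by
      by_contra hne
      have hd : Disjoint (blk v) (blk v') :=
        (haveI : Std.Symm (α := Finset (Fin n)) Disjoint := ⟨fun a b hab => hab.symm⟩; hbs.1.forall) (hblkmem v) (hblkmem v') hne
      rw [h] at h1
      exact Finset.disjoint_left.mp hd h1 h2
    have key : ∀ (S S' : Finset (Fin n)) (hS : S ∈ σ) (hS' : S' ∈ σ)
        (hv : v ∈ S) (hv' : v' ∈ S'), S = S' →
        M S hS ⟨v, hv⟩ = M S' hS' ⟨v', hv'⟩ → v = v' := by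
      intro S S' hS hS' hv hv' hEq hMEq
      subst hEq
      rw [Subsingleton.elim hS' hS] at hMEq
      have := hMinj S hS hMEq
      exact congrArg Subtype.val this
    exact key _ _ _ _ _ _ hbb h
  exact ⟨Equiv.ofBijective π (Finite.injective_iff_bijective.mp hπinj), fun v => by
    simpa using hπD v⟩

/-- for `q ≥ 3`, the following are equivalent: (1) `F[D,q]` contains a
permutation; (2) some `f ∈ F[D,q]` and block-sequential schedule `σ` give a permutation
`f^σ`; (3) all vertices of `D` can be covered by pairwise vertex-disjoint cycles. -/
theorem reversible_block_sequential {n q : ℕ} (hn : 1 ≤ n) (hq : 3 ≤ q)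
    (D : Fin n → Fin n → Prop) :
    ((∃ f : (Fin n → Fin q) → Fin n → Fin q, ExactIG D f ∧ Function.Bijective f) ↔
      (∃ (f : (Fin n → Fin q) → Fin n → Fin q) (σ : List (Finset (Fin n))),
        ExactIG D f ∧ BlockSequential σ ∧ Function.Bijective (applySchedule f σ))) ∧
    ((∃ (f : (Fin n → Fin q) → Fin n → Fin q) (σ : List (Finset (Fin n))),
        ExactIG D f ∧ BlockSequential σ ∧ Function.Bijective (applySchedule f σ)) ↔
      CoveredByDisjointCycles D) := by
  have P1toP2 : (∃ f : (Fin n → Fin q) → Fin n → Fin q, ExactIG D f ∧ Function.Bijective f) →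
      (∃ (f : (Fin n → Fin q) → Fin n → Fin q) (σ : List (Finset (Fin n))),
        ExactIG D f ∧ BlockSequential σ ∧ Function.Bijective (applySchedule f σ)) := by
    rintro ⟨f, hf, hbij⟩
    refine ⟨f, [Finset.univ], hf, ⟨List.pairwise_singleton _ _,
      fun v => ⟨Finset.univ, List.mem_singleton_self _, Finset.mem_univ v⟩⟩, ?_⟩
    have hs : applySchedule f [Finset.univ] = f := by
      funext x v
      show applyBlock f Finset.univ (id x) v = f x v
      simp [applyBlock]
    rw [hs]
    exact hbij
  have P2toP3 : (∃ (f : (Fin n → Fin q) → Fin n → Fin q) (σ : List (Finset (Fin n))),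
        ExactIG D f ∧ BlockSequential σ ∧ Function.Bijective (applySchedule f σ)) →
      CoveredByDisjointCycles D := by
    rintro ⟨f, σ, hf, hbs, hbij⟩
    obtain ⟨e, he⟩ := schedule_to_perm hq hf hbs hbij
    exact perm_to_cover e he
  have P3toP1 : CoveredByDisjointCycles D →
      (∃ f : (Fin n → Fin q) → Fin n → Fin q, ExactIG D f ∧ Function.Bijective f) := by
    intro h
    obtain ⟨e, he⟩ := cover_to_perm h
    exact construct_perm hq D e he
  exact ⟨⟨P1toP2, fun h => P3toP1 (P2toP3 h)⟩, ⟨P2toP3, fun h => P1toP2 (P3toP1 h)⟩⟩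
end
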